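/- arXiv:1301.7717 — 14 statements merged into one kernel-verified Lean document; each statement's English description precedes it below -/
import Mathlib

section
/- If x is an element of a closed convex cone K in a finite-dimensional Euclidean space, then the tangent space of K at x equals the orthogonal complement of the linear span of the conjugate face of face(x,K), i.e., tan(x,K) = (face(x,K)^△)^⊥, where face(x,K) is the minimal face of K containing x, F^△ = K* ∩ F^⊥ is the conjugate face, and tan(x,K) = cl(dir(x,K)) ∩ −cl(dir(x,K)) with dir(x,K) = {y : x + t·y ∈ K for some t > 0}. -/
noncomputable section

/-- The dual cone of a set `S`: all `y` with `⟨x, y⟩ ≥ 0` for every `x ∈ S`. -/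
def dualCone {E : Type*} [NormedAddCommGroup E] [InnerProductSpace ℝ E] (S : Set E) : Set E :=
  {y | ∀ x ∈ S, 0 ≤ (inner ℝ x y : ℝ)}

/-- The orthogonal complement of the linear span of a set `S`. -/
def perpSpan {E : Type*} [NormedAddCommGroup E] [InnerProductSpace ℝ E] (S : Set E) : Set E :=
  {y | ∀ x ∈ S, (inner ℝ x y : ℝ) = 0}

/-- The cone of feasible directions of `C` at `x`. -/
def dirCone {E : Type*} [AddCommGroup E] [Module ℝ E] (x : E) (C : Set E) : Set E :=
  {y | ∃ t : ℝ, 0 < t ∧ x + t • y ∈ C}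

/-- The tangent space of `C` at `x`: `cl(dir(x,C)) ∩ −cl(dir(x,C))`. -/
def tanSpace {E : Type*} [AddCommGroup E] [Module ℝ E] [TopologicalSpace E]
    (x : E) (C : Set E) : Set E :=
  closure (dirCone x C) ∩ (-closure (dirCone x C))

/-- `F` is a face of the convex set `K`. -/
def IsFaceOf {E : Type*} [AddCommGroup E] [Module ℝ E] (F K : Set E) : Prop :=
  F ⊆ K ∧ Convex ℝ F ∧ ∀ x ∈ K, ∀ y ∈ K, ∀ t : ℝ, 0 < t → t < 1 →
    t • x + (1 - t) • y ∈ F → x ∈ F ∧ y ∈ F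

end

open RealInnerProductSpace

/-- Extension of a segment past a point of the intrinsic interior. -/
lemma extend_intrinsicInterior {E : Type*} [NormedAddCommGroup E] [InnerProductSpace ℝ E]
    {F : Set E} {x f : E} (hxF : x ∈ intrinsicInterior ℝ F) (hf : f ∈ F) :
    ∃ δ : ℝ, 0 < δ ∧ x + δ • (x - f) ∈ F := by
  obtain ⟨y, hy, hyx⟩ := mem_intrinsicInterior.1 hxF
  obtain ⟨ε, hε, hball⟩ := Metric.mem_nhds_iff.1 (mem_interior_iff_mem_nhds.1 hy)
  have hxspan : x ∈ affineSpan ℝ F := by rw [← hyx]; exact y.2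
  have hfspan : f ∈ affineSpan ℝ F := subset_affineSpan ℝ F hf
  obtain ⟨δ, hδ0, hδ⟩ : ∃ δ : ℝ, 0 < δ ∧ δ * ‖x - f‖ < ε := by
    rcases eq_or_ne (‖x - f‖) 0 with h0 | h0
    · exact ⟨1, one_pos, by simpa [h0] using hε⟩
    · have hn : 0 < ‖x - f‖ := lt_of_le_of_ne (norm_nonneg _) (Ne.symm h0)
      refine ⟨ε / (2 * ‖x - f‖), by positivity, ?_⟩
      have : ε / (2 * ‖x - f‖) * ‖x - f‖ = ε / 2 := by field_simp
      rw [this]; linarith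
  have hmem : x + δ • (x - f) ∈ affineSpan ℝ F := by
    have := (affineSpan ℝ F).smul_vsub_vadd_mem' δ hxspan hfspan hxspan
    simpa [vsub_eq_sub, vadd_eq_add, add_comm] using this
  refine ⟨δ, hδ0, ?_⟩
  have : (⟨x + δ • (x - f), hmem⟩ : affineSpan ℝ F) ∈ Metric.ball y ε := by
    rw [Metric.mem_ball, Subtype.dist_eq, hyx]
    simp only [dist_eq_norm, add_sub_cancel_left, norm_smul, Real.norm_eq_abs,
      abs_of_pos hδ0]
    exact hδ
  exact hball this

theorem stmt0 {E : Type*} [NormedAddCommGroup E] [InnerProductSpace ℝ E]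
    [FiniteDimensional ℝ E]
    (K : Set E) (hKclosed : IsClosed K) (hKconv : Convex ℝ K)
    (hKcone : ∀ c : ℝ, 0 ≤ c → ∀ z ∈ K, c • z ∈ K)
    (x : E) (hx : x ∈ K)
    (F : Set E) (hF : IsFaceOf F K) (hxF : x ∈ intrinsicInterior ℝ F) :
    tanSpace x K = perpSpan (dualCone K ∩ perpSpan F) := by
  have hxFmem : x ∈ F := intrinsicInterior_subset hxF
  -- The set `N' = K* ∩ x^⊥`
  set N : Set E := {z | z ∈ dualCone K ∧ ⟪x, z⟫ = 0} with hN
  -- Step 1: `dualCone K ∩ perpSpan F = N`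
  have hNF : dualCone K ∩ perpSpan F = N := by
    ext z
    constructor
    · rintro ⟨hz1, hz2⟩
      exact ⟨hz1, hz2 x hxFmem⟩
    · rintro ⟨hz1, hz2⟩
      refine ⟨hz1, fun f hf => ?_⟩
      obtain ⟨δ, hδ0, hg⟩ := extend_intrinsicInterior hxF hf
      have hgK : x + δ • (x - f) ∈ K := hF.1 hg
      have hfK : f ∈ K := hF.1 hf
      have h1 : 0 ≤ ⟪x + δ • (x - f), z⟫ := hz1 _ hgK
      have h2 : 0 ≤ ⟪f, z⟫ := hz1 _ hfK
      have hexp : ⟪x + δ • (x - f), z⟫ = (1 + δ) * ⟪x, z⟫ - δ * ⟪f, z⟫ := by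
        rw [inner_add_left, real_inner_smul_left, inner_sub_left]; ring
      rw [hexp, hz2] at h1
      nlinarith
  rw [hNF]
  -- The cone of feasible directions as a `ConvexCone`
  have hDrep : ∀ y : E, y ∈ dirCone x K ↔ ∃ s : ℝ, 0 < s ∧ ∃ k ∈ K, y = s • (k - x) := by
    intro y
    constructor
    · rintro ⟨t, ht, hk⟩
      refine ⟨t⁻¹, inv_pos.2 ht, x + t • y, hk, ?_⟩
      rw [add_sub_cancel_left, smul_smul, inv_mul_cancel₀ ht.ne', one_smul]
    · rintro ⟨s, hs, k, hk, rfl⟩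
      refine ⟨s⁻¹, inv_pos.2 hs, ?_⟩
      rw [smul_smul, inv_mul_cancel₀ hs.ne', one_smul, add_sub_cancel]
      exact hk
  set D : ConvexCone ℝ E :=
    { carrier := dirCone x K
      smul_mem' := by
        rintro c hc y hy
        rcases (hDrep y).1 hy with ⟨s, hs, k, hk, rfl⟩
        exact (hDrep _).2 ⟨c * s, mul_pos hc hs, k, hk, by rw [smul_smul]⟩
      add_mem' := by
        rintro y hy w hw
        rcases (hDrep y).1 hy with ⟨s, hs, k, hk, rfl⟩
        rcases (hDrep w).1 hw with ⟨r, hr, m, hm, rfl⟩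
        refine (hDrep _).2 ⟨s + r, by linarith, (s / (s + r)) • k + (r / (s + r)) • m,
          hKconv hk hm (by positivity) (by positivity) (by field_simp), ?_⟩
        have hsr : s + r ≠ 0 := by positivity
        match_scalars <;> (field_simp; try ring) } with hD
  have hDcoe : (D : Set E) = dirCone x K := rfl
  -- Step 2: the inner dual cone of `dirCone x K` is `N`
  have hdual : (ProperCone.innerDual (dirCone x K) : Set E) = N := by
    ext z
    simp only [SetLike.mem_coe, ProperCone.mem_innerDual]
    constructor
    · intro h
      have hxD : x ∈ dirCone x K := ⟨1, one_pos, by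
        have := hKcone 2 (by norm_num) x hx
        rw [one_smul, ← two_smul ℝ]; exact this⟩
      have hnxD : -x ∈ dirCone x K := ⟨1/2, by norm_num, by
        have := hKcone (1/2) (by norm_num) x hx
        convert this using 1; module⟩
      have h1 : 0 ≤ ⟪x, z⟫ := h hxD
      have h2 : 0 ≤ ⟪-x, z⟫ := h hnxD
      rw [inner_neg_left, neg_nonneg] at h2
      have hxz : ⟪x, z⟫ = 0 := le_antisymm h2 h1
      refine ⟨fun k hk => ?_, hxz⟩
      have hkx : k - x ∈ dirCone x K := ⟨1, one_pos, by rwa [one_smul, add_sub_cancel]⟩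
      have := h hkx
      rw [inner_sub_left, hxz, sub_zero] at this
      exact this
    · rintro ⟨hz1, hz2⟩ y ⟨t, ht, hk⟩
      have h1 : 0 ≤ ⟪x + t • y, z⟫ := hz1 _ hk
      rw [inner_add_left, real_inner_smul_left, hz2] at h1
      nlinarith
  -- Step 3: bipolar — `closure (dirCone x K) = innerDualCone N`
  have hne : (D.closure : Set E).Nonempty := by
    refine ⟨0, ?_⟩
    rw [ConvexCone.coe_closure]
    exact subset_closure ((hDrep 0).2 ⟨1, one_pos, x, hx, by simp⟩)
  have hcl : IsClosed (D.closure : Set E) := by rw [ConvexCone.coe_closure]; exact isClosed_closure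
  have hpt : D.closure.Pointed := ConvexCone.Pointed.of_nonempty_of_isClosed hne hcl
  let P : ProperCone ℝ E := ⟨D.closure.toPointedCone hpt, hcl⟩
  have hbipolar := ProperCone.innerDual_innerDual P
  -- dual of closure equals dual of the set
  have hdc : ProperCone.innerDual (D.closure : Set E) = ProperCone.innerDual (dirCone x K) := by
    apply le_antisymm
    · intro z hz y hy
      exact ProperCone.mem_innerDual.1 hz (by rw [ConvexCone.coe_closure]; exact subset_closure hy)
    · intro z hz y hy
      rw [ConvexCone.coe_closure] at hy
      have hclosed : IsClosed {w : E | 0 ≤ ⟪w, z⟫} :=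
        isClosed_le continuous_const (continuous_id.inner continuous_const)
      exact hclosed.closure_subset_iff.2 (fun w hw => ProperCone.mem_innerDual.1 hz hw) hy
  have hkey : closure (dirCone x K) = (ProperCone.innerDual N : Set E) := by
    have h1 : (D.closure : Set E) = closure (dirCone x K) := by rw [ConvexCone.coe_closure, hDcoe]
    have h2 : (ProperCone.innerDual (ProperCone.innerDual (D.closure : Set E) : Set E) : Set E)
        = (D.closure : Set E) := congrArg (fun C : ProperCone ℝ E => (C : Set E)) hbipolar
    rw [← h1, ← h2, hdc, hdual]
  -- Step 4: conclude
  ext y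
  simp only [tanSpace, Set.mem_inter_iff, Set.mem_neg, hkey, SetLike.mem_coe,
    ProperCone.mem_innerDual, perpSpan, Set.mem_setOf_eq]
  constructor
  · rintro ⟨h1, h2⟩ z hz
    have := h2 hz
    rw [inner_neg_right] at this
    exact le_antisymm (by linarith) (h1 hz)
  · intro h
    refine ⟨fun z hz => (h z hz).ge, fun z hz => ?_⟩
    rw [inner_neg_right, h z hz, neg_zero]
end

section
/- For a face F of a closed convex cone K and any x in the relative interior of F, the two descriptions of the conjugate face coincide: K* ∩ F^⊥ = K* ∩ x^⊥. -/
lemma push_out {E : Type*} [NormedAddCommGroup E] [InnerProductSpace ℝ E]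
    (F : Set E) (x : E) (hx : x ∈ intrinsicInterior ℝ F) (z : E) (hz : z ∈ F) :
    ∃ t : ℝ, 0 < t ∧ x + t • (x - z) ∈ F := by
  rw [mem_intrinsicInterior] at hx
  obtain ⟨y, hy, hyx⟩ := hx
  have hxspan : x ∈ affineSpan ℝ F := hyx ▸ y.2
  have hzspan : z ∈ affineSpan ℝ F := subset_affineSpan ℝ F hz
  have hmem : ∀ t : ℝ, (1 + t) • (x - z) + z ∈ affineSpan ℝ F := fun t => by
    have := AffineMap.lineMap_mem (k := ℝ) (1 + t) hzspan hxspan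
    rwa [AffineMap.lineMap_apply_module'] at this
  set c : ℝ → affineSpan ℝ F := fun t => ⟨(1 + t) • (x - z) + z, hmem t⟩ with hc
  have hcont : Continuous c := by
    apply Continuous.subtype_mk
    continuity
  have hc0 : c 0 = y := by
    apply Subtype.ext
    simp [hc, hyx]
  have hopen : IsOpen (c ⁻¹' interior ((↑) ⁻¹' F : Set <| affineSpan ℝ F)) :=
    isOpen_interior.preimage hcont
  have h0 : (0 : ℝ) ∈ c ⁻¹' interior ((↑) ⁻¹' F : Set <| affineSpan ℝ F) := by
    simp [hc0, hy]
  obtain ⟨ε, hε, hball⟩ := Metric.isOpen_iff.1 hopen 0 h0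
  refine ⟨ε / 2, by positivity, ?_⟩
  have hmem2 : c (ε / 2) ∈ interior ((↑) ⁻¹' F : Set <| affineSpan ℝ F) := by
    apply hball
    simp only [Metric.mem_ball, Real.dist_eq, sub_zero]
    rw [abs_of_pos (by positivity)]
    linarith
  have h3 := interior_subset hmem2
  have heq : (1 + ε / 2) • (x - z) + z = x + (ε / 2) • (x - z) := by module
  simpa [hc, heq] using h3

theorem stmt1 {E : Type*} [NormedAddCommGroup E] [InnerProductSpace ℝ E]
    [FiniteDimensional ℝ E]
    (K : Set E) (hKclosed : IsClosed K) (hKconv : Convex ℝ K)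
    (hKcone : ∀ c : ℝ, 0 ≤ c → ∀ z ∈ K, c • z ∈ K)
    (F : Set E) (hF : IsFaceOf F K)
    (x : E) (hx : x ∈ intrinsicInterior ℝ F) :
    dualCone K ∩ perpSpan F = dualCone K ∩ {z | (inner ℝ x z : ℝ) = 0} := by

  have hxF : x ∈ F := intrinsicInterior_subset hx
  ext w
  simp only [Set.mem_inter_iff, Set.mem_setOf_eq, dualCone, perpSpan]
  constructor
  · rintro ⟨hw, hperp⟩
    exact ⟨hw, hperp x hxF⟩
  · rintro ⟨hw, hxw⟩
    refine ⟨hw, fun z hzF => ?_⟩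
    obtain ⟨t, ht, htF⟩ := push_out F x hx z hzF
    have h1 : 0 ≤ (inner ℝ (x + t • (x - z)) w : ℝ) := hw _ (hF.1 htF)
    have h2 : 0 ≤ (inner ℝ z w : ℝ) := hw z (hF.1 hzF)
    rw [inner_add_left, real_inner_smul_left, inner_sub_left, hxw] at h1
    nlinarith
end

section
/- Let x be the n×n positive semidefinite matrix with identity block I_r in the top-left corner and zeros elsewhere. Then the tangent space of the PSD cone at x is the set of symmetric matrices whose bottom-right (n−r)×(n−r) block is zero. -/
namespace Stmt2Aux

open Matrix Finset

variable (n r : ℕ)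

abbrev Mat (n : ℕ) := Matrix (Fin n) (Fin n) ℝ

/-- The base point. -/
def X : Mat n := Matrix.of fun i j : Fin n => if i = j ∧ (i : ℕ) < r then (1 : ℝ) else 0

/-- The complementary diagonal block. -/
def W : Mat n := Matrix.of fun i j : Fin n => if i = j ∧ r ≤ (i : ℕ) then (1 : ℝ) else 0

variable {n r}

lemma X_symm : (X n r)ᵀ = X n r := by
  ext i j
  simp only [X, transpose_apply, of_apply]
  by_cases h : j = i
  · subst h; rfl
  · rw [if_neg (fun hc => h hc.1), if_neg (fun hc => h hc.1.symm)]

lemma W_symm : (W n r)ᵀ = W n r := by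
  ext i j
  simp only [W, transpose_apply, of_apply]
  by_cases h : j = i
  · subst h; rfl
  · rw [if_neg (fun hc => h hc.1), if_neg (fun hc => h hc.1.symm)]

lemma X_mulVec (u : Fin n → ℝ) :
    X n r *ᵥ u = fun i : Fin n => if (i : ℕ) < r then u i else 0 := by
  funext i
  simp only [mulVec, dotProduct, X, of_apply]
  rw [Finset.sum_eq_single i]
  · by_cases h : (i : ℕ) < r <;> simp [h]
  · intro j _ hj
    rw [if_neg (fun hc => hj hc.1.symm), zero_mul]
  · intro h; exact absurd (Finset.mem_univ i) h

lemma W_mulVec (u : Fin n → ℝ) :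
    W n r *ᵥ u = fun i : Fin n => if r ≤ (i : ℕ) then u i else 0 := by
  funext i
  simp only [mulVec, dotProduct, W, of_apply]
  rw [Finset.sum_eq_single i]
  · by_cases h : r ≤ (i : ℕ) <;> simp [h]
  · intro j _ hj
    rw [if_neg (fun hc => hj hc.1.symm), zero_mul]
  · intro h; exact absurd (Finset.mem_univ i) h

lemma X_quad (u : Fin n → ℝ) :
    u ⬝ᵥ X n r *ᵥ u = ∑ i : Fin n, if (i : ℕ) < r then u i ^ 2 else 0 := by
  rw [X_mulVec]
  simp only [dotProduct]
  refine Finset.sum_congr rfl fun i _ => ?_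
  by_cases h : (i : ℕ) < r <;> simp [h, sq]

lemma W_quad (u : Fin n → ℝ) :
    u ⬝ᵥ W n r *ᵥ u = ∑ i : Fin n, if (i : ℕ) < r then 0 else u i ^ 2 := by
  rw [W_mulVec]
  simp only [dotProduct]
  by_cases hn : True
  · refine Finset.sum_congr rfl fun i _ => ?_
    by_cases h : (i : ℕ) < r
    · simp [h, not_le.mpr h]
    · simp [h, not_lt.mp h, sq]
  · exact absurd trivial hn

/-- Generic ℓ¹-type bound on bilinear forms. -/
lemma dot_bound (v : Mat n) (a b : Fin n → ℝ) :
    |a ⬝ᵥ v *ᵥ b| ≤ (∑ i, ∑ j, |v i j|) * ((∑ i, |a i|) * (∑ i, |b i|)) := by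
  have expand : a ⬝ᵥ v *ᵥ b = ∑ i, ∑ j, a i * (v i j * b j) := by
    simp [dotProduct, mulVec, Finset.mul_sum]
  rw [expand]
  have hSa : (0:ℝ) ≤ ∑ k, |a k| := Finset.sum_nonneg fun k _ => abs_nonneg _
  calc |∑ i, ∑ j, a i * (v i j * b j)|
      ≤ ∑ i, ∑ j, |a i * (v i j * b j)| :=
        (Finset.abs_sum_le_sum_abs _ _).trans
          (Finset.sum_le_sum fun i _ => Finset.abs_sum_le_sum_abs _ _)
    _ ≤ ∑ i, ∑ j, |v i j| * ((∑ k, |a k|) * (∑ k, |b k|)) := by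
        refine Finset.sum_le_sum fun i _ => Finset.sum_le_sum fun j _ => ?_
        have ha : |a i| ≤ ∑ k, |a k| :=
          Finset.single_le_sum (fun k _ => abs_nonneg (a k)) (Finset.mem_univ i)
        have hb : |b j| ≤ ∑ k, |b k| :=
          Finset.single_le_sum (fun k _ => abs_nonneg (b k)) (Finset.mem_univ j)
        calc |a i * (v i j * b j)| = |v i j| * (|a i| * |b j|) := by
              rw [abs_mul, abs_mul]; ring
          _ ≤ |v i j| * ((∑ k, |a k|) * (∑ k, |b k|)) := by
              refine mul_le_mul_of_nonneg_left ?_ (abs_nonneg _)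
              exact mul_le_mul ha hb (abs_nonneg _) hSa
    _ = (∑ i, ∑ j, |v i j|) * ((∑ k, |a k|) * (∑ k, |b k|)) := by
        simp only [← Finset.sum_mul]

/-- Cauchy–Schwarz specialization. -/
lemma cs_bound (a : Fin n → ℝ) : (∑ i, |a i|) ^ 2 ≤ (n : ℝ) * ∑ i, a i ^ 2 := by
  have h := Finset.sum_mul_sq_le_sq_mul_sq Finset.univ (fun _ : Fin n => (1:ℝ))
    (fun i => |a i|)
  simpa [sq_abs] using h

set_option maxHeartbeats 1000000 in
/-- The key approximation lemma. -/
lemma key (v : Mat n) (hsym : v.IsSymm)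
    (hBR : ∀ i j : Fin n, r ≤ (i : ℕ) → r ≤ (j : ℕ) → v i j = 0)
    {ε : ℝ} (hε : 0 < ε) :
    ∃ t : ℝ, 0 < t ∧ (X n r + t • (v + ε • W n r)).PosSemidef := by
  obtain ⟨C, hCdef⟩ : ∃ c : ℝ, c = ∑ i, ∑ j, |v i j| := ⟨_, rfl⟩
  have hC : 0 ≤ C := hCdef ▸ Finset.sum_nonneg fun i _ => Finset.sum_nonneg fun j _ => abs_nonneg _
  have hCn : 0 ≤ C * n := mul_nonneg hC (Nat.cast_nonneg n)
  obtain ⟨K, hKdef⟩ : ∃ k : ℝ, k = C * n + 1 := ⟨_, rfl⟩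
  have hK : 0 < K := by rw [hKdef]; positivity
  obtain ⟨δ, hδdef⟩ : ∃ d : ℝ, d = ε / K := ⟨_, rfl⟩
  have hδ : 0 < δ := hδdef ▸ div_pos hε hK
  obtain ⟨t, htdef⟩ : ∃ s : ℝ, s = δ / (K * (1 + δ ^ 2)) := ⟨_, rfl⟩
  have ht : 0 < t := by rw [htdef]; positivity
  have h_a : C * n * δ ≤ ε := by
    have h1 : C * n * δ ≤ K * δ := mul_le_mul_of_nonneg_right (by rw [hKdef]; linarith) hδ.le
    have h2 : K * δ = ε := by
      rw [hδdef]; field_simp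
    linarith
  have h_b : t * (C * n) * δ + t * (C * n) / δ ≤ 1 := by
    have heq : t * K * δ + t * K / δ = 1 := by
      rw [htdef]
      field_simp
      ring
    have htk : t * (C * n) ≤ t * K := mul_le_mul_of_nonneg_left (by rw [hKdef]; linarith) ht.le
    have h1 : t * (C * n) * δ ≤ t * K * δ := mul_le_mul_of_nonneg_right htk hδ.le
    have h2 : t * (C * n) / δ ≤ t * K / δ := (div_le_div_iff_of_pos_right hδ).mpr htk
    linarith
  refine ⟨t, ht, Matrix.PosSemidef.of_dotProduct_mulVec_nonneg ?_ fun u => ?_⟩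
  · -- Hermitian
    show (X n r + t • (v + ε • W n r)).IsSymm
    unfold Matrix.IsSymm
    rw [transpose_add, transpose_smul, transpose_add, transpose_smul, X_symm, W_symm, hsym]
  · -- quadratic form
    have hstar : star u = u := by funext i; simp
    rw [hstar]
    show (0:ℝ) ≤ u ⬝ᵥ (X n r + t • (v + ε • W n r)) *ᵥ u
    obtain ⟨P, hPdef⟩ : ∃ c : ℝ, c = ∑ i : Fin n, if (i : ℕ) < r then u i ^ 2 else 0 := ⟨_, rfl⟩
    obtain ⟨Q, hQdef⟩ : ∃ c : ℝ, c = ∑ i : Fin n, if (i : ℕ) < r then 0 else u i ^ 2 := ⟨_, rfl⟩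
    have hP : 0 ≤ P := hPdef ▸ Finset.sum_nonneg fun i _ => by positivity
    have hQ : 0 ≤ Q := hQdef ▸ Finset.sum_nonneg fun i _ => by positivity
    obtain ⟨p, hpdef⟩ : ∃ p : Fin n → ℝ, p = fun i : Fin n => if (i : ℕ) < r then u i else 0 := ⟨_, rfl⟩
    obtain ⟨q, hqdef⟩ : ∃ q : Fin n → ℝ, q = fun i : Fin n => if (i : ℕ) < r then 0 else u i := ⟨_, rfl⟩
    have hupq : u = p + q := by
      funext i
      by_cases h : (i : ℕ) < r <;> simp [hpdef, hqdef, h]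
    have hqvq : q ⬝ᵥ v *ᵥ q = 0 := by
      simp only [dotProduct, mulVec]
      refine Finset.sum_eq_zero fun i _ => ?_
      by_cases hi : (i : ℕ) < r
      · simp [hqdef, hi]
      · have hz : (∑ j, v i j * q j) = 0 := by
          refine Finset.sum_eq_zero fun j _ => ?_
          by_cases hj : (j : ℕ) < r
          · simp [hqdef, hj]
          · rw [hBR i j (not_lt.mp hi) (not_lt.mp hj), zero_mul]
        rw [hz, mul_zero]
    have hsplit : u ⬝ᵥ v *ᵥ u = u ⬝ᵥ v *ᵥ p + p ⬝ᵥ v *ᵥ q := by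
      calc u ⬝ᵥ v *ᵥ u = u ⬝ᵥ v *ᵥ (p + q) := by rw [← hupq]
        _ = u ⬝ᵥ v *ᵥ p + u ⬝ᵥ v *ᵥ q := by rw [mulVec_add, dotProduct_add]
        _ = u ⬝ᵥ v *ᵥ p + (p + q) ⬝ᵥ v *ᵥ q := by rw [← hupq]
        _ = u ⬝ᵥ v *ᵥ p + (p ⬝ᵥ v *ᵥ q + q ⬝ᵥ v *ᵥ q) := by rw [add_dotProduct]
        _ = u ⬝ᵥ v *ᵥ p + p ⬝ᵥ v *ᵥ q := by rw [hqvq, add_zero]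
    obtain ⟨Sa, hSadef⟩ : ∃ c : ℝ, c = ∑ i, |u i| := ⟨_, rfl⟩
    obtain ⟨Sp, hSpdef⟩ : ∃ c : ℝ, c = ∑ i, |p i| := ⟨_, rfl⟩
    obtain ⟨Sq, hSqdef⟩ : ∃ c : ℝ, c = ∑ i, |q i| := ⟨_, rfl⟩
    have hSa0 : 0 ≤ Sa := hSadef ▸ Finset.sum_nonneg fun i _ => abs_nonneg _
    have hSp0 : 0 ≤ Sp := hSpdef ▸ Finset.sum_nonneg fun i _ => abs_nonneg _
    have hSqa : Sq ≤ Sa := by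
      rw [hSqdef, hSadef]
      refine Finset.sum_le_sum fun i _ => ?_
      by_cases h : (i : ℕ) < r <;> simp [hqdef, h]
    have hb1 : |u ⬝ᵥ v *ᵥ p| ≤ C * (Sa * Sp) := by
      rw [hCdef, hSadef, hSpdef]; exact dot_bound v u p
    have hb2 : |p ⬝ᵥ v *ᵥ q| ≤ C * (Sp * Sq) := by
      rw [hCdef, hSpdef, hSqdef]; exact dot_bound v p q
    have hA : -(2 * C * (Sa * Sp)) ≤ u ⬝ᵥ v *ᵥ u := by
      have e1 : -(C * (Sa * Sp)) ≤ u ⬝ᵥ v *ᵥ p := neg_le_of_abs_le hb1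
      have e2 : -(C * (Sp * Sq)) ≤ p ⬝ᵥ v *ᵥ q := neg_le_of_abs_le hb2
      have e3 : C * (Sp * Sq) ≤ C * (Sa * Sp) := by
        have : Sp * Sq ≤ Sa * Sp := by nlinarith
        exact mul_le_mul_of_nonneg_left this hC
      rw [hsplit]; linarith
    -- Cauchy--Schwarz facts
    have hsum_p : ∑ i, p i ^ 2 = P := by
      rw [hPdef]
      refine Finset.sum_congr rfl fun i _ => ?_
      by_cases h : (i : ℕ) < r <;> simp [hpdef, h]
    have hsum_u : ∑ i, u i ^ 2 = P + Q := by
      rw [hPdef, hQdef, ← Finset.sum_add_distrib]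
      refine Finset.sum_congr rfl fun i _ => ?_
      by_cases h : (i : ℕ) < r <;> simp [h]
    have hSp2 : Sp ^ 2 ≤ (n : ℝ) * P := by
      have := cs_bound p
      rw [hsum_p] at this
      rwa [hSpdef]
    have hSa2 : Sa ^ 2 ≤ (n : ℝ) * (P + Q) := by
      have := cs_bound u
      rw [hsum_u] at this
      rwa [hSadef]
    -- Young's inequality
    have hyoung : 2 * (Sa * Sp) ≤ δ * Sa ^ 2 + Sp ^ 2 / δ := by
      have h0 : 0 ≤ (δ * Sa - Sp) ^ 2 := sq_nonneg _
      have hcancel : Sp ^ 2 / δ * δ = Sp ^ 2 := div_mul_cancel₀ _ (ne_of_gt hδ)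
      have hkey : 2 * (Sa * Sp) * δ ≤ (δ * Sa ^ 2 + Sp ^ 2 / δ) * δ := by
        rw [add_mul, hcancel]; nlinarith
      exact le_of_mul_le_mul_right hkey hδ
    have hA2 : -(C * (δ * ((n:ℝ) * (P + Q)) + ((n:ℝ) * P) / δ)) ≤ u ⬝ᵥ v *ᵥ u := by
      have s1 : δ * Sa ^ 2 ≤ δ * ((n:ℝ) * (P + Q)) := mul_le_mul_of_nonneg_left hSa2 hδ.le
      have s2 : Sp ^ 2 / δ ≤ ((n:ℝ) * P) / δ := (div_le_div_iff_of_pos_right hδ).mpr hSp2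
      have s3 : 2 * C * (Sa * Sp) ≤ C * (δ * ((n:ℝ) * (P + Q)) + ((n:ℝ) * P) / δ) := by
        have : 2 * (Sa * Sp) ≤ δ * ((n:ℝ) * (P + Q)) + ((n:ℝ) * P) / δ := by linarith
        nlinarith
      linarith
    -- expand the quadratic form
    have expand : u ⬝ᵥ (X n r + t • (v + ε • W n r)) *ᵥ u
        = P + t * (u ⬝ᵥ v *ᵥ u) + t * (ε * Q) := by
      rw [add_mulVec, dotProduct_add, smul_mulVec, add_mulVec, smul_mulVec,
        dotProduct_smul, dotProduct_add, dotProduct_smul, X_quad, ← hPdef, W_quad, ← hQdef]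
      simp only [smul_eq_mul]
      ring
    rw [expand]
    -- final numeric combination
    have k1 : 0 ≤ (1 - (t * (C * n) * δ + t * (C * n) / δ)) * P :=
      mul_nonneg (by linarith) hP
    have k2 : 0 ≤ (t * (ε - C * n * δ)) * Q :=
      mul_nonneg (mul_nonneg ht.le (by linarith)) hQ
    have k3 : t * (-(C * (δ * ((n:ℝ) * (P + Q)) + ((n:ℝ) * P) / δ))) ≤ t * (u ⬝ᵥ v *ᵥ u) :=
      mul_le_mul_of_nonneg_left hA2 ht.le
    have e1 : (1 - (t * (C * n) * δ + t * (C * n) / δ)) * P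
        = P - t * (C * n) * δ * P - t * (C * n) / δ * P := by ring
    have e2 : (t * (ε - C * n * δ)) * Q = t * ε * Q - t * (C * n * δ) * Q := by ring
    have e3 : t * (-(C * (δ * ((n:ℝ) * (P + Q)) + ((n:ℝ) * P) / δ)))
        = -(t * (C * n) * δ * P) - t * (C * n * δ) * Q - t * (C * n) / δ * P := by ring
    rw [e1] at k1; rw [e2] at k2; rw [e3] at k3
    linarith

/-- `v` is in the closure of the direction cone. -/
lemma mem_closure_dir (v : Mat n) (hsym : v.IsSymm)
    (hBR : ∀ i j : Fin n, r ≤ (i : ℕ) → r ≤ (j : ℕ) → v i j = 0) :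
    v ∈ closure (dirCone (X n r) {m : Mat n | m.PosSemidef}) := by
  have htend : Filter.Tendsto (fun k : ℕ => v + (1 / (k + 1 : ℝ)) • W n r)
      Filter.atTop (nhds v) := by
    have h0 : Filter.Tendsto (fun k : ℕ => (1 / (k + 1 : ℝ))) Filter.atTop (nhds 0) :=
      tendsto_one_div_add_atTop_nhds_zero_nat
    have := (h0.smul_const (W n r)).const_add v
    simpa using this
  refine mem_closure_of_tendsto htend (Filter.Eventually.of_forall fun k => ?_)
  have hk : (0:ℝ) < 1 / (k + 1 : ℝ) := by positivity
  obtain ⟨t, ht, hpsd⟩ := key v hsym hBR hk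
  exact ⟨t, ht, hpsd⟩

/-- The closed superset used for the forward inclusion. -/
def Sset (n r : ℕ) : Set (Mat n) :=
  {y | y.IsSymm ∧ ∀ i j : Fin n, r ≤ (i : ℕ) → r ≤ (j : ℕ) →
    0 ≤ y i i + y i j + y j i + y j j}

lemma dir_subset_Sset :
    dirCone (X n r) {m : Mat n | m.PosSemidef} ⊆ Sset n r := by
  rintro y ⟨t, ht, hpsd⟩
  have hherm : (X n r + t • y).IsSymm := hpsd.1
  have hysym : y.IsSymm := by
    have hs : (X n r + t • y)ᵀ = X n r + t • y := hherm
    rw [transpose_add, transpose_smul, X_symm] at hs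
    have : t • yᵀ = t • y := add_left_cancel hs
    have := smul_right_injective (Mat n) (ne_of_gt ht) this
    exact this
  refine ⟨hysym, fun i j hi hj => ?_⟩
  set z := X n r + t • y with hz
  have hquad := hpsd.dotProduct_mulVec_nonneg (Pi.single i 1 + Pi.single j 1)
  have hq2 : (0:ℝ) ≤ (Pi.single i 1 + Pi.single j 1) ⬝ᵥ z *ᵥ (Pi.single i 1 + Pi.single j 1) := by
    simpa using hquad
  have hcomp : (Pi.single i 1 + Pi.single j 1) ⬝ᵥ z *ᵥ (Pi.single i 1 + Pi.single j 1)
      = z i i + z i j + z j i + z j j := by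
    simp [mulVec_add, dotProduct_add, add_dotProduct, mulVec_single, single_dotProduct]
    ring
  have hzab : ∀ a b : Fin n, r ≤ (a : ℕ) → r ≤ (b : ℕ) → z a b = t * y a b := by
    intro a b ha _
    have hX : X n r a b = 0 := by
      simp only [X, of_apply]
      exact if_neg fun hc => absurd hc.2 (not_lt.mpr ha)
    simp [hz, hX]
  rw [hcomp, hzab i i hi hi, hzab i j hi hj, hzab j i hj hi, hzab j j hj hj] at hq2
  nlinarith

lemma Sset_closed : IsClosed (Sset n r) := by
  have h1 : IsClosed {y : Mat n | y.IsSymm} := by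
    have he : {y : Mat n | y.IsSymm} = ⋂ i, ⋂ j, {y : Mat n | y j i = y i j} := by
      ext y
      simp only [Set.mem_setOf_eq, Set.mem_iInter]
      exact ⟨fun h i j => h.apply i j, fun h => Matrix.IsSymm.ext fun i j => h i j⟩
    rw [he]
    exact isClosed_iInter fun i => isClosed_iInter fun j =>
      isClosed_eq (continuous_id.matrix_elem j i) (continuous_id.matrix_elem i j)
  have h2 : IsClosed {y : Mat n | ∀ i j : Fin n, r ≤ (i : ℕ) → r ≤ (j : ℕ) →
      0 ≤ y i i + y i j + y j i + y j j} := by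
    have he : {y : Mat n | ∀ i j : Fin n, r ≤ (i : ℕ) → r ≤ (j : ℕ) →
        0 ≤ y i i + y i j + y j i + y j j}
        = ⋂ i : Fin n, ⋂ j : Fin n, {y : Mat n | r ≤ (i : ℕ) → r ≤ (j : ℕ) →
        0 ≤ y i i + y i j + y j i + y j j} := by
      ext y; simp [Set.mem_iInter]
    rw [he]
    refine isClosed_iInter fun i => isClosed_iInter fun j => ?_
    by_cases hi : r ≤ (i : ℕ)
    · by_cases hj : r ≤ (j : ℕ)
      · have he2 : {y : Mat n | r ≤ (i : ℕ) → r ≤ (j : ℕ) →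
            0 ≤ y i i + y i j + y j i + y j j}
            = {y : Mat n | 0 ≤ y i i + y i j + y j i + y j j} := by
          ext y; simp [hi, hj]
        rw [he2]
        exact isClosed_le continuous_const
          ((((continuous_id.matrix_elem i i).add (continuous_id.matrix_elem i j)).add
            (continuous_id.matrix_elem j i)).add (continuous_id.matrix_elem j j))
      · have he2 : {y : Mat n | r ≤ (i : ℕ) → r ≤ (j : ℕ) →
            0 ≤ y i i + y i j + y j i + y j j} = Set.univ := by
          ext y; simp [hj]
        rw [he2]; exact isClosed_univ
    · have he2 : {y : Mat n | r ≤ (i : ℕ) → r ≤ (j : ℕ) →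
          0 ≤ y i i + y i j + y j i + y j j} = Set.univ := by
        ext y; simp [hi]
      rw [he2]; exact isClosed_univ
  have he : Sset n r = {y : Mat n | y.IsSymm} ∩ {y : Mat n | ∀ i j : Fin n,
      r ≤ (i : ℕ) → r ≤ (j : ℕ) → 0 ≤ y i i + y i j + y j i + y j j} := rfl
  rw [he]
  exact h1.inter h2

end Stmt2Aux

open Matrix in
theorem stmt2 (n r : ℕ) (hr : r ≤ n)
    (x : Matrix (Fin n) (Fin n) ℝ)
    (hx : x = Matrix.of fun i j : Fin n => if i = j ∧ (i : ℕ) < r then (1 : ℝ) else 0) :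
    tanSpace x {m : Matrix (Fin n) (Fin n) ℝ | m.PosSemidef} =
      {v : Matrix (Fin n) (Fin n) ℝ |
        v.IsSymm ∧ ∀ i j : Fin n, r ≤ (i : ℕ) → r ≤ (j : ℕ) → v i j = 0} := by
  have hxX : x = Stmt2Aux.X n r := hx
  subst hxX
  ext y
  simp only [tanSpace, Set.mem_inter_iff, Set.mem_neg, Set.mem_setOf_eq]
  constructor
  · rintro ⟨h1, h2⟩
    have hy : y ∈ Stmt2Aux.Sset n r :=
      closure_minimal Stmt2Aux.dir_subset_Sset Stmt2Aux.Sset_closed h1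
    have hny : -y ∈ Stmt2Aux.Sset n r :=
      closure_minimal Stmt2Aux.dir_subset_Sset Stmt2Aux.Sset_closed h2
    refine ⟨hy.1, fun i j hi hj => ?_⟩
    have e1 := hy.2 i j hi hj
    have e2 := hny.2 i j hi hj
    have eii := hy.2 i i hi hi
    have eii' := hny.2 i i hi hi
    have ejj := hy.2 j j hj hj
    have ejj' := hny.2 j j hj hj
    simp only [Matrix.neg_apply] at e2 eii' ejj'
    have hsym := hy.1.apply i j
    linarith
  · rintro ⟨hsym, hzero⟩
    constructor
    · exact Stmt2Aux.mem_closure_dir y hsym hzero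
    · have hnsym : (-y).IsSymm := by
        unfold Matrix.IsSymm
        rw [transpose_neg, hsym]
      have hnzero : ∀ i j : Fin n, r ≤ (i : ℕ) → r ≤ (j : ℕ) → (-y) i j = 0 := by
        intro i j hi hj
        simp [hzero i j hi hj]
      exact Stmt2Aux.mem_closure_dir (-y) hnsym hnzero
end

section
/- For an arbitrary positive semidefinite n×n matrix x, the tangent space of the PSD cone at x equals the set of matrices of the form w + wᵀ such that for some real β the block matrix [[x, w],[wᵀ, βI]] is positive semidefinite. -/
namespace Stmt3Aux
open Matrix

variable {n : ℕ}

lemma psd_iff {m : Type*} [Fintype m] (M : Matrix m m ℝ) :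
    M.PosSemidef ↔ Mᵀ = M ∧ ∀ v, 0 ≤ v ⬝ᵥ M *ᵥ v := by
  rw [Matrix.posSemidef_iff_dotProduct_mulVec]
  unfold Matrix.IsHermitian
  simp [Matrix.conjTranspose_eq_transpose_of_trivial]

lemma dot_transpose (w : Matrix (Fin n) (Fin n) ℝ) (u v : Fin n → ℝ) :
    u ⬝ᵥ wᵀ *ᵥ v = v ⬝ᵥ w *ᵥ u := by
  simp only [dotProduct, mulVec, transpose_apply, Finset.mul_sum]
  rw [Finset.sum_comm]
  exact Finset.sum_congr rfl fun i _ => Finset.sum_congr rfl fun j _ => by ring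

lemma block_quad (A B C D : Matrix (Fin n) (Fin n) ℝ) (v u : Fin n → ℝ) :
    Sum.elim v u ⬝ᵥ (fromBlocks A B C D) *ᵥ Sum.elim v u
      = v ⬝ᵥ A *ᵥ v + v ⬝ᵥ B *ᵥ u + u ⬝ᵥ C *ᵥ v + u ⬝ᵥ D *ᵥ u := by
  simp [fromBlocks_mulVec, sumElim_dotProduct_sumElim, dotProduct_add]
  ring

lemma dot_self_nonneg {m : Type*} [Fintype m] (v : m → ℝ) : 0 ≤ v ⬝ᵥ v :=
  Finset.sum_nonneg fun i _ => mul_self_nonneg _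

lemma eq_zero_of_dot (M : Matrix (Fin n) (Fin n) ℝ)
    (h : ∀ z z', z ⬝ᵥ M *ᵥ z' = 0) : M = 0 := by
  ext i j
  have := h (Pi.single i 1) (Pi.single j 1)
  simpa [dotProduct, mulVec, Pi.single_apply, Finset.mul_sum] using this

lemma quad_cont (z : Fin n → ℝ) :
    Continuous fun m : Matrix (Fin n) (Fin n) ℝ => z ⬝ᵥ m *ᵥ z := by
  simp only [dotProduct, mulVec]
  exact continuous_finset_sum _ fun i _ => continuous_const.mul (continuous_finset_sum _ fun j _ =>
    (continuous_id.matrix_elem i j).mul continuous_const)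

lemma transpose_cont :
    Continuous fun m : Matrix (Fin n) (Fin n) ℝ => mᵀ :=
  continuous_pi fun i => continuous_pi fun j => (continuous_apply i).comp (continuous_apply j)

lemma key_of_block (x w : Matrix (Fin n) (Fin n) ℝ) (β : ℝ)
    (hb : (Matrix.fromBlocks x w wᵀ (β • (1 : Matrix (Fin n) (Fin n) ℝ))).PosSemidef) :
    ∀ v, (v ⬝ᵥ w *ᵥ v)^2 ≤ (β * (v ⬝ᵥ v)) * (v ⬝ᵥ x *ᵥ v) := by
  intro v
  have hq : ∀ s : ℝ, 0 ≤ (β * (v ⬝ᵥ v)) * (s * s) + (2 * (v ⬝ᵥ w *ᵥ v)) * s + v ⬝ᵥ x *ᵥ v := by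
    intro s
    have h0 := ((psd_iff _).1 hb).2 (Sum.elim v (s • v))
    rw [block_quad] at h0
    simp only [mulVec_smul, dotProduct_smul, smul_dotProduct, smul_mulVec, one_mulVec,
      smul_eq_mul, dot_transpose] at h0
    nlinarith [h0]
  have hd := discrim_le_zero hq
  rw [discrim] at hd
  nlinarith [hd]

lemma mem_dir (x w : Matrix (Fin n) (Fin n) ℝ) (β ε : ℝ) (hx : x.PosSemidef) (hε : 0 < ε)
    (hkey : ∀ v, (v ⬝ᵥ w *ᵥ v)^2 ≤ (β * (v ⬝ᵥ v)) * (v ⬝ᵥ x *ᵥ v)) :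
    w + wᵀ + ε • (1 : Matrix (Fin n) (Fin n) ℝ)
      ∈ dirCone x {m : Matrix (Fin n) (Fin n) ℝ | m.PosSemidef} := by
  have hm1 : (0:ℝ) < max β 1 := lt_of_lt_of_le one_pos (le_max_right _ _)
  refine ⟨ε / max β 1, div_pos hε hm1, ?_⟩
  set t := ε / max β 1 with htdef
  have ht : 0 < t := div_pos hε hm1
  have htβ : t * β ≤ ε := by
    have h1 : t * max β 1 = ε := div_mul_cancel₀ _ (ne_of_gt hm1)
    nlinarith [le_max_left β 1, ht.le]
  have hxt : xᵀ = x := ((psd_iff x).1 hx).1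
  rw [Set.mem_setOf_eq, psd_iff]
  constructor
  · simp only [transpose_add, transpose_smul, transpose_one, hxt, transpose_transpose]
    abel
  · intro v
    set X := v ⬝ᵥ x *ᵥ v with hXd
    set W := v ⬝ᵥ w *ᵥ v with hWd
    set N := v ⬝ᵥ v with hNd
    have hform : v ⬝ᵥ (x + t • (w + wᵀ + ε • (1:Matrix (Fin n) (Fin n) ℝ))) *ᵥ v
        = X + 2*t*W + t*ε*N := by
      simp only [add_mulVec, dotProduct_add, smul_mulVec, one_mulVec, dotProduct_smul,
        smul_eq_mul, dot_transpose, mulVec_add, ← hXd, ← hWd, ← hNd]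
      ring
    rw [hform]
    have hX : 0 ≤ X := ((psd_iff x).1 hx).2 v
    have hN : 0 ≤ N := dot_self_nonneg v
    have hk : W^2 ≤ (β*N)*X := hkey v
    have h1 : t^2*W^2 ≤ t*ε*(N*X) := by
      have h2 : t^2*W^2 ≤ t^2*((β*N)*X) := by nlinarith [sq_nonneg t]
      have h3 : (t*N*X)*(t*β) ≤ (t*N*X)*ε :=
        mul_le_mul_of_nonneg_left htβ (mul_nonneg (mul_nonneg ht.le hN) hX)
      nlinarith
    have hP : 0 ≤ X + t*ε*N := by positivity
    have h4 : (2*t*W)^2 ≤ (X + t*ε*N)^2 := by nlinarith [h1, sq_nonneg (X - t*ε*N)]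
    nlinarith [h4, hP]

lemma mem_closure_dir (x w : Matrix (Fin n) (Fin n) ℝ) (β : ℝ) (hx : x.PosSemidef)
    (hkey : ∀ v, (v ⬝ᵥ w *ᵥ v)^2 ≤ (β * (v ⬝ᵥ v)) * (v ⬝ᵥ x *ᵥ v)) :
    w + wᵀ ∈ closure (dirCone x {m : Matrix (Fin n) (Fin n) ℝ | m.PosSemidef}) := by
  have hc : Continuous fun ε : ℝ => w + wᵀ + ε • (1 : Matrix (Fin n) (Fin n) ℝ) := by
    fun_prop
  have h : Filter.Tendsto (fun ε : ℝ => w + wᵀ + ε • (1 : Matrix (Fin n) (Fin n) ℝ))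
      (nhdsWithin 0 (Set.Ioi 0)) (nhds (w + wᵀ)) := by
    have h0 : Filter.Tendsto (fun ε : ℝ => w + wᵀ + ε • (1 : Matrix (Fin n) (Fin n) ℝ))
        (nhds 0) (nhds (w + wᵀ)) := by simpa using hc.tendsto 0
    exact h0.mono_left nhdsWithin_le_nhds
  exact mem_closure_of_tendsto h
    (Filter.eventually_of_mem self_mem_nhdsWithin fun ε hε => mem_dir x w β ε hx hε hkey)

lemma exists_proj (x : Matrix (Fin n) (Fin n) ℝ) (hx : x.PosSemidef) :
    ∃ (P : Matrix (Fin n) (Fin n) ℝ) (lam : ℝ),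
      Pᵀ = P ∧ P * P = P ∧ P * x = x ∧ x * P = x ∧ 0 < lam ∧
        ∀ v, lam * (v ⬝ᵥ P *ᵥ v) ≤ v ⬝ᵥ x *ᵥ v := by
  classical
  obtain ⟨U, d, hd, hU1, hU2, hxU⟩ :
      ∃ (U : Matrix (Fin n) (Fin n) ℝ) (d : Fin n → ℝ),
        (∀ i, 0 ≤ d i) ∧ Uᵀ * U = 1 ∧ U * Uᵀ = 1 ∧ x = U * diagonal d * Uᵀ := by
    have hUst : star (Matrix.IsHermitian.eigenvectorUnitary hx.1 : Matrix (Fin n) (Fin n) ℝ)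
        = (Matrix.IsHermitian.eigenvectorUnitary hx.1 : Matrix (Fin n) (Fin n) ℝ)ᵀ := by
      rw [Matrix.star_eq_conjTranspose, Matrix.conjTranspose_eq_transpose_of_trivial]
    refine ⟨(Matrix.IsHermitian.eigenvectorUnitary hx.1 : Matrix (Fin n) (Fin n) ℝ),
      hx.1.eigenvalues, hx.eigenvalues_nonneg, ?_, ?_, ?_⟩
    · rw [← hUst]
      exact Matrix.mem_unitaryGroup_iff'.mp (Matrix.IsHermitian.eigenvectorUnitary hx.1).2
    · rw [← hUst]
      exact Matrix.mem_unitaryGroup_iff.mp (Matrix.IsHermitian.eigenvectorUnitary hx.1).2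
    · have := hx.1.spectral_theorem
      rwa [Unitary.conjStarAlgAut_apply, RCLike.ofReal_real_eq_id, Function.id_comp, hUst] at this
  obtain ⟨lam, hlam_pos, hlam_le⟩ :
      ∃ lam : ℝ, 0 < lam ∧ ∀ i, lam * (if d i = 0 then (0:ℝ) else 1) ≤ d i := by
    by_cases h : (Finset.univ.filter (fun i => d i ≠ 0)).Nonempty
    · refine ⟨(Finset.univ.filter (fun i => d i ≠ 0)).inf' h d, ?_, ?_⟩
      · rw [Finset.lt_inf'_iff]
        intro i hi
        rw [Finset.mem_filter] at hi
        exact lt_of_le_of_ne (hd i) (Ne.symm hi.2)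
      · intro i
        by_cases hdi : d i = 0
        · simp [hdi]
        · simp only [hdi, if_false, mul_one]
          exact Finset.inf'_le _ (by simp [hdi])
    · refine ⟨1, one_pos, fun i => ?_⟩
      have : d i = 0 := by
        by_contra hdi
        exact h ⟨i, by simp [hdi]⟩
      simp [this]
  set e : Fin n → ℝ := fun i => if d i = 0 then 0 else 1 with hedef
  have hcongr_mul : ∀ F G : Matrix (Fin n) (Fin n) ℝ,
      (U * F * Uᵀ) * (U * G * Uᵀ) = U * (F * G) * Uᵀ := by
    intro F G
    calc (U * F * Uᵀ) * (U * G * Uᵀ) = U * F * ((Uᵀ * U) * (G * Uᵀ)) := by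
          simp only [Matrix.mul_assoc]
      _ = U * (F * G) * Uᵀ := by rw [hU1, Matrix.one_mul]; simp only [Matrix.mul_assoc]
  have hee : diagonal e * diagonal e = diagonal e := by
    rw [diagonal_mul_diagonal]
    refine congrArg _ (funext fun i => ?_)
    by_cases h : d i = 0 <;> simp [hedef, h]
  have hed : diagonal e * diagonal d = diagonal d := by
    rw [diagonal_mul_diagonal]
    refine congrArg _ (funext fun i => ?_)
    by_cases h : d i = 0 <;> simp [hedef, h]
  have hde : diagonal d * diagonal e = diagonal d := by
    rw [diagonal_mul_diagonal]
    refine congrArg _ (funext fun i => ?_)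
    by_cases h : d i = 0 <;> simp [hedef, h]
  have hquad : ∀ (f : Fin n → ℝ) (v : Fin n → ℝ),
      v ⬝ᵥ (U * diagonal f * Uᵀ) *ᵥ v = ∑ i, f i * ((Uᵀ *ᵥ v) i)^2 := by
    intro f v
    rw [← Matrix.mulVec_mulVec, ← Matrix.mulVec_mulVec, Matrix.dotProduct_mulVec v U,
      ← Matrix.mulVec_transpose]
    simp only [Matrix.mulVec_diagonal, dotProduct]
    exact Finset.sum_congr rfl fun i _ => by ring
  refine ⟨U * diagonal e * Uᵀ, lam, ?_, ?_, ?_, ?_, hlam_pos, ?_⟩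
  · simp [Matrix.transpose_mul, Matrix.diagonal_transpose, Matrix.mul_assoc]
  · rw [hcongr_mul, hee]
  · rw [hxU, hcongr_mul, hed]
  · rw [hxU, hcongr_mul, hde]
  · intro v
    rw [hxU, hquad, hquad, Finset.mul_sum]
    refine Finset.sum_le_sum fun i _ => ?_
    rw [← mul_assoc]
    refine mul_le_mul_of_nonneg_right ?_ (sq_nonneg _)
    exact hlam_le i

lemma tan_to_rhs (x y : Matrix (Fin n) (Fin n) ℝ) (hx : x.PosSemidef) (hsymm : yᵀ = y)
    (hker : ∀ z, x *ᵥ z = 0 → z ⬝ᵥ y *ᵥ z = 0) :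
    ∃ (w : Matrix (Fin n) (Fin n) ℝ) (β : ℝ), y = w + wᵀ ∧
      (Matrix.fromBlocks x w wᵀ (β • (1 : Matrix (Fin n) (Fin n) ℝ))).PosSemidef := by
  classical
  obtain ⟨P, lam, hPt, hPP, hPx, hxP, hlam_pos, hx_lam⟩ := exists_proj x hx
  have hPvP : ∀ v, (P *ᵥ v) ⬝ᵥ (P *ᵥ v) = v ⬝ᵥ P *ᵥ v := by
    intro v
    have h1 := dot_transpose P (P *ᵥ v) v
    rw [hPt] at h1
    rw [h1, Matrix.mulVec_mulVec, hPP]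
  have hQker : ∀ v, x *ᵥ ((1 - P) *ᵥ v) = 0 := by
    intro v
    rw [Matrix.mulVec_mulVec, Matrix.mul_sub, Matrix.mul_one, hxP, sub_self, Matrix.zero_mulVec]
  have hbil : ∀ z z', x *ᵥ z = 0 → x *ᵥ z' = 0 → z ⬝ᵥ y *ᵥ z' = 0 := by
    intro z z' hz hz'
    have hzz' := hker (z + z') (by rw [Matrix.mulVec_add, hz, hz', add_zero])
    have h1 := hker z hz
    have h2 := hker z' hz'
    have hsw : z' ⬝ᵥ y *ᵥ z = z ⬝ᵥ y *ᵥ z' := by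
      rw [← hsymm, dot_transpose, hsymm]
    rw [Matrix.mulVec_add, dotProduct_add, add_dotProduct, add_dotProduct] at hzz'
    linarith [hzz', h1, h2, hsw]
  have hQyQ : (1 - P) * y * (1 - P) = 0 := by
    apply eq_zero_of_dot
    intro z z'
    rw [← Matrix.mulVec_mulVec, ← Matrix.mulVec_mulVec, Matrix.dotProduct_mulVec z (1-P),
      ← Matrix.mulVec_transpose]
    have hQt : (1 - P)ᵀ = 1 - P := by rw [transpose_sub, transpose_one, hPt]
    rw [hQt]
    exact hbil _ _ (hQker z) (hQker z')
  obtain ⟨w, hwdef⟩ : ∃ w', w' = P * y - (2⁻¹ : ℝ) • (P * y * P) := ⟨_, rfl⟩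
  have hwt : wᵀ = y * P - (2⁻¹ : ℝ) • (P * y * P) := by
    rw [hwdef]
    simp [transpose_sub, transpose_smul, transpose_mul, hPt, hsymm, Matrix.mul_assoc]
  have hy_eq : y = P * y + y * P - P * y * P := by
    have expand : (1 - P) * y * (1 - P) = y - P * y - y * P + P * y * P := by noncomm_ring
    rw [expand] at hQyQ
    apply eq_of_sub_eq_zero
    rw [← hQyQ]; abel
  have hPw : P * w = w := by
    rw [hwdef, Matrix.mul_sub, mul_smul_comm, ← Matrix.mul_assoc, ← Matrix.mul_assoc,
      ← Matrix.mul_assoc, hPP]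
  obtain ⟨c, hcdef, hc⟩ : ∃ c : ℝ, c = ∑ i, ∑ j, (w i j)^2 ∧ 0 ≤ c :=
    ⟨_, rfl, Finset.sum_nonneg fun i _ => Finset.sum_nonneg fun j _ => sq_nonneg _⟩
  refine ⟨w, c / lam, ?_, ?_⟩
  · nth_rewrite 1 [hy_eq]
    rw [hwt, hwdef]
    module
  · rw [psd_iff]
    constructor
    · simp [fromBlocks_transpose, transpose_transpose, transpose_smul, transpose_one,
        ((psd_iff x).1 hx).1]
    · intro p
      have hp : p = Sum.elim (p ∘ Sum.inl) (p ∘ Sum.inr) := by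
        funext q; cases q <;> rfl
      rw [hp, block_quad]
      set v : Fin n → ℝ := p ∘ Sum.inl
      set u : Fin n → ℝ := p ∘ Sum.inr
      rw [dot_transpose]
      have hDu : u ⬝ᵥ ((c / lam) • (1 : Matrix (Fin n) (Fin n) ℝ)) *ᵥ u
          = (c / lam) * (u ⬝ᵥ u) := by
        rw [smul_mulVec, one_mulVec, dotProduct_smul, smul_eq_mul]
      rw [hDu]
      have hW : v ⬝ᵥ w *ᵥ u = (P *ᵥ v) ⬝ᵥ (w *ᵥ u) := by
        conv_lhs => rw [← hPw, ← Matrix.mulVec_mulVec, Matrix.dotProduct_mulVec v P,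
          ← Matrix.mulVec_transpose, hPt]
      have ha2 : 0 ≤ v ⬝ᵥ P *ᵥ v := by rw [← hPvP]; exact dot_self_nonneg _
      have hb2 : 0 ≤ u ⬝ᵥ u := dot_self_nonneg u
      have hX : 0 ≤ v ⬝ᵥ x *ᵥ v := ((psd_iff x).1 hx).2 v
      have hXlam : lam * (v ⬝ᵥ P *ᵥ v) ≤ v ⬝ᵥ x *ᵥ v := hx_lam v
      have hwu : (w *ᵥ u) ⬝ᵥ (w *ᵥ u) ≤ c * (u ⬝ᵥ u) := by
        simp only [dotProduct, mulVec, ← sq]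
        rw [hcdef, Finset.sum_mul]
        refine Finset.sum_le_sum fun i _ => ?_
        exact Finset.sum_mul_sq_le_sq_mul_sq Finset.univ (fun j => w i j) u
      have hCS : (v ⬝ᵥ w *ᵥ u)^2 ≤ (v ⬝ᵥ P *ᵥ v) * (c * (u ⬝ᵥ u)) := by
        have h1 : ((P *ᵥ v) ⬝ᵥ (w *ᵥ u))^2
            ≤ ((P *ᵥ v) ⬝ᵥ (P *ᵥ v)) * ((w *ᵥ u) ⬝ᵥ (w *ᵥ u)) := by
          calc ((P *ᵥ v) ⬝ᵥ (w *ᵥ u))^2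
              ≤ (∑ i, ((P *ᵥ v) i)^2) * (∑ i, ((w *ᵥ u) i)^2) :=
                Finset.sum_mul_sq_le_sq_mul_sq Finset.univ (P *ᵥ v) (w *ᵥ u)
            _ = ((P *ᵥ v) ⬝ᵥ (P *ᵥ v)) * ((w *ᵥ u) ⬝ᵥ (w *ᵥ u)) := by
                simp only [dotProduct, sq]
        rw [hPvP] at h1
        rw [hW]
        calc ((P *ᵥ v) ⬝ᵥ (w *ᵥ u))^2 ≤ (v ⬝ᵥ P *ᵥ v) * ((w *ᵥ u) ⬝ᵥ (w *ᵥ u)) := h1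
          _ ≤ (v ⬝ᵥ P *ᵥ v) * (c * (u ⬝ᵥ u)) := mul_le_mul_of_nonneg_left hwu ha2
      have heq : (lam * (v ⬝ᵥ P *ᵥ v)) * ((c/lam) * (u ⬝ᵥ u))
          = (v ⬝ᵥ P *ᵥ v) * (c * (u ⬝ᵥ u)) := by
        field_simp
      have hCS2 : (v ⬝ᵥ w *ᵥ u)^2 ≤ (lam * (v ⬝ᵥ P *ᵥ v)) * ((c/lam) * (u ⬝ᵥ u)) :=
        heq.symm ▸ hCS
      have h4 : (2 * (v ⬝ᵥ w *ᵥ u))^2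
          ≤ ((lam * (v ⬝ᵥ P *ᵥ v)) + ((c/lam) * (u ⬝ᵥ u)))^2 := by
        nlinarith [hCS2, sq_nonneg ((lam * (v ⬝ᵥ P *ᵥ v)) - ((c/lam) * (u ⬝ᵥ u)))]
      have h5 : 0 ≤ (lam * (v ⬝ᵥ P *ᵥ v)) + ((c/lam) * (u ⬝ᵥ u)) :=
        add_nonneg (mul_nonneg hlam_pos.le ha2)
          (mul_nonneg (div_nonneg hc hlam_pos.le) hb2)
      nlinarith [h4, h5, hXlam]

end Stmt3Aux

open Matrix in
theorem stmt3 (n : ℕ) (x : Matrix (Fin n) (Fin n) ℝ) (hx : x.PosSemidef) :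
    tanSpace x {m : Matrix (Fin n) (Fin n) ℝ | m.PosSemidef} =
      {y : Matrix (Fin n) (Fin n) ℝ | ∃ (w : Matrix (Fin n) (Fin n) ℝ) (β : ℝ),
        y = w + wᵀ ∧
        (Matrix.fromBlocks x w wᵀ (β • (1 : Matrix (Fin n) (Fin n) ℝ))).PosSemidef} := by
  open Stmt3Aux in
  ext y
  constructor
  · rintro ⟨h1, h2⟩
    rw [Set.mem_neg] at h2
    have hsub : closure (dirCone x {m : Matrix (Fin n) (Fin n) ℝ | m.PosSemidef})
        ⊆ {m : Matrix (Fin n) (Fin n) ℝ | mᵀ = m} := by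
      apply closure_minimal
      · rintro m ⟨t, ht, hm⟩
        have h := ((Stmt3Aux.psd_iff _).1 hm).1
        have hxt : xᵀ = x := ((Stmt3Aux.psd_iff x).1 hx).1
        rw [transpose_add, transpose_smul, hxt, add_right_inj] at h
        exact smul_right_injective _ (ne_of_gt ht) h
      · exact isClosed_eq Stmt3Aux.transpose_cont continuous_id
    have hsymm : yᵀ = y := hsub h1
    have key : ∀ z, x *ᵥ z = 0 →
        ∀ m ∈ closure (dirCone x {m : Matrix (Fin n) (Fin n) ℝ | m.PosSemidef}),
          0 ≤ z ⬝ᵥ m *ᵥ z := by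
      intro z hz
      have hsub2 : closure (dirCone x {m : Matrix (Fin n) (Fin n) ℝ | m.PosSemidef})
          ⊆ {m : Matrix (Fin n) (Fin n) ℝ | 0 ≤ z ⬝ᵥ m *ᵥ z} := by
        apply closure_minimal
        · rintro m ⟨t, ht, hm⟩
          have h := ((Stmt3Aux.psd_iff _).1 hm).2 z
          rw [add_mulVec, dotProduct_add, hz, dotProduct_zero, zero_add,
            smul_mulVec, dotProduct_smul, smul_eq_mul] at h
          simp only [Set.mem_setOf_eq]
          by_contra hq
          push_neg at hq
          nlinarith [mul_pos ht (neg_pos.mpr hq)]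
        · exact isClosed_le continuous_const (Stmt3Aux.quad_cont z)
      exact fun m hm => hsub2 hm
    have hker : ∀ z, x *ᵥ z = 0 → z ⬝ᵥ y *ᵥ z = 0 := by
      intro z hz
      have hpos := key z hz y h1
      have hneg := key z hz (-y) h2
      rw [Matrix.neg_mulVec, dotProduct_neg] at hneg
      linarith
    exact Stmt3Aux.tan_to_rhs x y hx hsymm hker
  · rintro ⟨w, β, rfl, hb⟩
    have hkey := Stmt3Aux.key_of_block x w β hb
    constructor
    · exact Stmt3Aux.mem_closure_dir x w β hx hkey
    · rw [Set.mem_neg]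
      have hneg : -(w + wᵀ) = (-w) + (-w)ᵀ := by
        rw [transpose_neg]
        abel
      rw [hneg]
      refine Stmt3Aux.mem_closure_dir x (-w) β hx fun v => ?_
      rw [Matrix.neg_mulVec, dotProduct_neg, neg_sq]
      exact hkey v
end

section
/- Let K be a closed convex cone, A : X → Y a linear map, b ∈ Y, and suppose the system Ax ≤_K b is feasible. Let F_min be the minimal cone, i.e., the face of K containing b − A x̄ in its relative interior for x̄ in the relative interior of the feasible set. Then for every feasible x, the slack b − Ax lies in F_min; consequently, the feasible sets of Ax ≤_K b and Ax ≤_{F_min} b coincide. -/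
lemma exists_extend {E : Type*} [NormedAddCommGroup E] [InnerProductSpace ℝ E]
    (C : Set E) (xbar x : E) (hxbar : xbar ∈ intrinsicInterior ℝ C) (hx : x ∈ C) :
    ∃ ε : ℝ, 0 < ε ∧ xbar + ε • (xbar - x) ∈ C := by
  obtain ⟨y, hy, hyx⟩ := mem_intrinsicInterior.1 hxbar
  have hxbarC : xbar ∈ C := intrinsicInterior_subset hxbar
  have hmem : ∀ t : ℝ, xbar + t • (xbar - x) ∈ affineSpan ℝ C := by
    intro t
    have := AffineSubspace.smul_vsub_vadd_mem (affineSpan ℝ C) t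
      (mem_affineSpan ℝ hxbarC) (mem_affineSpan ℝ hx) (mem_affineSpan ℝ hxbarC)
    simpa [vsub_eq_sub, vadd_eq_add, add_comm] using this
  set g : ℝ → affineSpan ℝ C := fun t => ⟨xbar + t • (xbar - x), hmem t⟩ with hg
  have hgc : Continuous g := by
    apply Continuous.subtype_mk
    continuity
  have hg0 : g 0 = y := by
    apply Subtype.ext
    simp [hg, hyx]
  have hopen : IsOpen (g ⁻¹' interior ((↑) ⁻¹' C : Set (affineSpan ℝ C))) :=
    isOpen_interior.preimage hgc
  have h0 : (0 : ℝ) ∈ g ⁻¹' interior ((↑) ⁻¹' C : Set (affineSpan ℝ C)) := by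
    simp [hg0, hy]
  obtain ⟨δ, hδ, hball⟩ := Metric.isOpen_iff.1 hopen 0 h0
  refine ⟨δ / 2, by linarith, ?_⟩
  have : g (δ / 2) ∈ interior ((↑) ⁻¹' C : Set (affineSpan ℝ C)) := by
    apply hball
    simp only [Metric.mem_ball, dist_zero_right, Real.norm_eq_abs]
    rw [abs_of_pos (by linarith : (0:ℝ) < δ/2)]
    linarith
  have h2 : g (δ / 2) ∈ ((↑) ⁻¹' C : Set (affineSpan ℝ C)) := interior_subset this
  exact h2

theorem stmt4
    {X Y : Type*} [NormedAddCommGroup X] [InnerProductSpace ℝ X] [FiniteDimensional ℝ X]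
    [NormedAddCommGroup Y] [InnerProductSpace ℝ Y] [FiniteDimensional ℝ Y]
    (K : Set Y) (hKclosed : IsClosed K) (hKconv : Convex ℝ K)
    (hKcone : ∀ c : ℝ, 0 ≤ c → ∀ z ∈ K, c • z ∈ K)
    (A : X →ₗ[ℝ] Y) (b : Y)
    (xbar : X) (hxbar : xbar ∈ intrinsicInterior ℝ {x : X | b - A x ∈ K})
    (Fmin : Set Y) (hFminFace : IsFaceOf Fmin K)
    (hFmin : b - A xbar ∈ intrinsicInterior ℝ Fmin) :
    (∀ x : X, b - A x ∈ K → b - A x ∈ Fmin) ∧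
    {x : X | b - A x ∈ K} = {x : X | b - A x ∈ Fmin} := by
  obtain ⟨hsub, hconv, hface⟩ := hFminFace
  have main : ∀ x : X, b - A x ∈ K → b - A x ∈ Fmin := by
    intro x hxK
    obtain ⟨ε, hε, hyC⟩ := exists_extend {x : X | b - A x ∈ K} xbar x hxbar hxK
    have hyK : b - A (xbar + ε • (xbar - x)) ∈ K := hyC
    have h1ε : (0:ℝ) < 1 + ε := by linarith
    have hsY : b - A (xbar + ε • (xbar - x)) = (1+ε) • (b - A xbar) - ε • (b - A x) := by
      simp only [map_add, map_smul, map_sub]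
      module
    have ht0 : (0:ℝ) < (1+ε)⁻¹ := by positivity
    have ht1 : (1+ε)⁻¹ < 1 := by
      rw [inv_lt_one_iff₀]; right; linarith
    have key : (1+ε)⁻¹ • (b - A (xbar + ε • (xbar - x))) + (1 - (1+ε)⁻¹) • (b - A x)
        = b - A xbar := by
      rw [hsY]
      match_scalars <;> field_simp <;> ring
    exact (hface _ hyK _ hxK ((1+ε)⁻¹) ht0 ht1
      (key ▸ intrinsicInterior_subset hFmin)).2
  refine ⟨main, Set.Subset.antisymm (fun x hx => main x hx) (fun x hx => hsub hx)⟩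
end

section
/- Suppose F is a face of K with F_min ⊆ F. Then for every y ∈ F* with A*y = 0 and ⟨b, y⟩ = 0 (equivalently y ∈ F* ∩ N((A,b)*)), we have F_min ⊆ F ∩ y^⊥ ⊆ F. -/
theorem stmt6
    {X Y : Type*} [NormedAddCommGroup X] [InnerProductSpace ℝ X] [FiniteDimensional ℝ X]
    [NormedAddCommGroup Y] [InnerProductSpace ℝ Y] [FiniteDimensional ℝ Y]
    (K : Set Y) (hKclosed : IsClosed K) (hKconv : Convex ℝ K)
    (hKcone : ∀ c : ℝ, 0 ≤ c → ∀ z ∈ K, c • z ∈ K)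
    (A : X →ₗ[ℝ] Y) (b : Y)
    (xbar : X) (hxbar : xbar ∈ intrinsicInterior ℝ {x : X | b - A x ∈ K})
    (Fmin : Set Y) (hFminFace : IsFaceOf Fmin K)
    (hFmin : b - A xbar ∈ intrinsicInterior ℝ Fmin)
    (F : Set Y) (hFface : IsFaceOf F K) (hFminF : Fmin ⊆ F)
    (y : Y) (hy : y ∈ dualCone F)
    (hyA : ∀ x : X, (inner ℝ (A x) y : ℝ) = 0) (hyb : (inner ℝ b y : ℝ) = 0) :
    Fmin ⊆ F ∩ {z : Y | (inner ℝ z y : ℝ) = 0} ∧ F ∩ {z : Y | (inner ℝ z y : ℝ) = 0} ⊆ F := by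
  constructor
  · intro z hz
    refine ⟨hFminF hz, ?_⟩
    set w : Y := b - A xbar with hw
    have hwperp : (inner ℝ w y : ℝ) = 0 := by
      rw [hw, inner_sub_left, hyA, hyb]; ring
    rw [mem_intrinsicInterior] at hFmin
    obtain ⟨w', hw'int, hw'eq⟩ := hFmin
    have hS : ∃ ε > 0, ∀ p : Y, p ∈ affineSpan ℝ Fmin → dist p w < ε → p ∈ Fmin := by
      rw [mem_interior_iff_mem_nhds, nhds_induced] at hw'int
      obtain ⟨S, hSmem, hsub⟩ := hw'int
      rw [hw'eq] at hSmem
      obtain ⟨ε, hε, hball⟩ := Metric.mem_nhds_iff.mp hSmem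
      refine ⟨ε, hε, fun p hp hd => ?_⟩
      exact hsub (show (⟨p, hp⟩ : affineSpan ℝ Fmin) ∈ (↑) ⁻¹' S from hball hd)
    obtain ⟨ε, hε, hmem⟩ := hS
    set d : ℝ := ‖w - z‖ with hd
    set t : ℝ := ε / (2 * (d + 1)) with ht
    have hdnn : 0 ≤ d := norm_nonneg _
    have htpos : 0 < t := div_pos hε (by linarith)
    have hzspan : z ∈ affineSpan ℝ Fmin := subset_affineSpan ℝ Fmin hz
    have hwspan : w ∈ affineSpan ℝ Fmin := by rw [← hw'eq]; exact w'.2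
    set u : Y := (1 + t) • (w - z) + z with hu
    have huspan : u ∈ affineSpan ℝ Fmin := by
      have := AffineSubspace.smul_vsub_vadd_mem (affineSpan ℝ Fmin) (1 + t) hwspan hzspan hzspan
      simpa [hu, vsub_eq_sub, vadd_eq_add] using this
    have hudist : dist u w < ε := by
      have : u - w = t • (w - z) := by
        rw [hu]; module
      rw [dist_eq_norm, this, norm_smul, Real.norm_eq_abs, abs_of_pos htpos, ← hd]
      have hte : t * (d + 1) = ε / 2 := by
        rw [ht]; field_simp
      nlinarith
    have huF : u ∈ Fmin := hmem u huspan hudist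
    have h1 : 0 ≤ (inner ℝ u y : ℝ) := hy u (hFminF huF)
    have h2 : 0 ≤ (inner ℝ z y : ℝ) := hy z (hFminF hz)
    have h3 : (inner ℝ u y : ℝ) = -t * (inner ℝ z y : ℝ) := by
      rw [hu, inner_add_left, inner_smul_left, inner_sub_left, hwperp]
      simp only [conj_trivial]
      ring
    have : (inner ℝ z y : ℝ) ≤ 0 := by nlinarith
    exact le_antisymm this h2
  · exact Set.inter_subset_left
end

section
/- Suppose F is a face of K with F_min ⊆ F, and suppose there exists x with b − Ax ∈ ri F. Then F = F_min. -/
lemma ri_extend {E : Type*} [NormedAddCommGroup E] [NormedSpace ℝ E]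
    {C : Set E} {y z : E} (hy : y ∈ intrinsicInterior ℝ C) (hz : z ∈ C) :
    ∃ w ∈ C, ∃ t : ℝ, 0 < t ∧ t < 1 ∧ y = t • z + (1 - t) • w := by
  obtain ⟨y', hy', hcoe⟩ := mem_intrinsicInterior.mp hy
  have hzs : z ∈ affineSpan ℝ C := subset_affineSpan ℝ C hz
  have hmem : ∀ t : ℝ, t • (y - z) + z ∈ affineSpan ℝ C := by
    intro t
    have := AffineSubspace.smul_vsub_vadd_mem (affineSpan ℝ C) t y'.2 hzs hzs
    simpa [vsub_eq_sub, vadd_eq_add, hcoe] using this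
  set g : ℝ → (affineSpan ℝ C : Set E) := fun t => ⟨t • (y - z) + z, hmem t⟩ with hg
  have hgc : Continuous g := by
    apply Continuous.subtype_mk
    exact (continuous_id.smul continuous_const).add continuous_const
  have hg1 : g 1 = y' := by
    apply Subtype.ext
    simp [hg, hcoe]
  have h1 : (1 : ℝ) ∈ g ⁻¹' interior ((↑) ⁻¹' C : Set (affineSpan ℝ C)) := by
    simp only [Set.mem_preimage, hg1]; exact hy'
  have hopen : IsOpen (g ⁻¹' interior ((↑) ⁻¹' C : Set (affineSpan ℝ C))) :=
    isOpen_interior.preimage hgc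
  obtain ⟨ε, hε, hball⟩ := Metric.isOpen_iff.mp hopen 1 h1
  set t0 : ℝ := 1 + ε / 2 with ht0
  have ht01 : 1 < t0 := by rw [ht0]; linarith
  have ht0mem : g t0 ∈ interior ((↑) ⁻¹' C : Set (affineSpan ℝ C)) := by
    apply hball
    rw [Metric.mem_ball, Real.dist_eq, show t0 - 1 = ε / 2 by rw [ht0]; ring,
      abs_of_pos (by linarith)]
    linarith
  have hwC : t0 • (y - z) + z ∈ C := by
    have : g t0 ∈ ((↑) ⁻¹' C : Set (affineSpan ℝ C)) := interior_subset ht0mem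
    exact this
  have ht0ne : t0 ≠ 0 := by linarith
  refine ⟨t0 • (y - z) + z, hwC, 1 - 1 / t0, ?_, ?_, ?_⟩
  · have : 1 / t0 < 1 := by rw [div_lt_one (by linarith)]; exact ht01
    linarith
  · have : 0 < 1 / t0 := by positivity
    linarith
  · match_scalars <;> field_simp <;> ring

theorem stmt7
    {X Y : Type*} [NormedAddCommGroup X] [InnerProductSpace ℝ X] [FiniteDimensional ℝ X]
    [NormedAddCommGroup Y] [InnerProductSpace ℝ Y] [FiniteDimensional ℝ Y]
    (K : Set Y) (hKclosed : IsClosed K) (hKconv : Convex ℝ K)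
    (hKcone : ∀ c : ℝ, 0 ≤ c → ∀ z ∈ K, c • z ∈ K)
    (A : X →ₗ[ℝ] Y) (b : Y)
    (xbar : X) (hxbar : xbar ∈ intrinsicInterior ℝ {x : X | b - A x ∈ K})
    (Fmin : Set Y) (hFminFace : IsFaceOf Fmin K)
    (hFmin : b - A xbar ∈ intrinsicInterior ℝ Fmin)
    (F : Set Y) (hFface : IsFaceOf F K) (hFminF : Fmin ⊆ F)
    (hstrict : ∃ x : X, b - A x ∈ intrinsicInterior ℝ F) :
    F = Fmin := by
  obtain ⟨x, hx⟩ := hstrict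
  have hsF : b - A x ∈ F := intrinsicInterior_subset hx
  have hsK : b - A x ∈ K := hFface.1 hsF
  have hxfeas : x ∈ {x : X | b - A x ∈ K} := hsK
  -- push xbar past x inside the feasible set
  obtain ⟨x', hx', t, ht0, ht1, hxbar_eq⟩ := ri_extend hxbar hxfeas
  have hx'K : b - A x' ∈ K := hx'
  -- b - A xbar is the convex combination t (b - A x) + (1-t) (b - A x')
  have hcomb : b - A xbar = t • (b - A x) + (1 - t) • (b - A x') := by
    rw [hxbar_eq]
    simp only [map_add, map_smul, smul_sub]
    module
  have hFminMem : b - A xbar ∈ Fmin := intrinsicInterior_subset hFmin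
  have hsFmin : b - A x ∈ Fmin := by
    have := hFminFace.2.2 (b - A x) hsK (b - A x') hx'K t ht0 ht1 (hcomb ▸ hFminMem)
    exact this.1
  -- now show F ⊆ Fmin
  apply Set.Subset.antisymm _ hFminF
  intro y hy
  have hyK : y ∈ K := hFface.1 hy
  obtain ⟨w, hw, u, hu0, hu1, heq⟩ := ri_extend hx hy
  have hwK : w ∈ K := hFface.1 hw
  have := hFminFace.2.2 y hyK w hwK u hu0 hu1 (heq ▸ hsFmin)
  exact this.1
end

section
/- Let y_0 = 0, y_1, y_2, … be any sequence of vectors with y_i ∈ (K ∩ y_0^⊥ ∩ … ∩ y_{i−1}^⊥)* ∩ N((A,b)*) for each i ≥ 1, and set F_i = K ∩ y_0^⊥ ∩ … ∩ y_i^⊥. Then F_min ⊆ F_i for all i. -/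
open Filter Topology in
/-- From a point in the intrinsic interior, segments to points of `s` extend a bit past it. -/
lemma relint_extend {E : Type*} [NormedAddCommGroup E] [InnerProductSpace ℝ E]
    {s : Set E} {w z : E} (hw : w ∈ intrinsicInterior ℝ s) (hz : z ∈ s) :
    ∃ t : ℝ, 0 < t ∧ w + t • (w - z) ∈ s := by
  rw [intrinsicInterior] at hw
  obtain ⟨w', hw', rfl⟩ := hw
  rw [mem_interior_iff_mem_nhds, nhds_subtype_eq_comap, Filter.mem_comap] at hw'
  obtain ⟨V, hV, hVs⟩ := hw'
  have hcont : Tendsto (fun t : ℝ => (w' : E) + t • ((w' : E) - z)) (𝓝 0) (𝓝 (w' : E)) := by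
    have hc : Continuous fun t : ℝ => (w' : E) + t • ((w' : E) - z) := by continuity
    simpa using hc.tendsto 0
  have hev0 : ∀ᶠ t in 𝓝 (0:ℝ), (w' : E) + t • ((w' : E) - z) ∈ V := hcont hV
  have hev : ∀ᶠ t in 𝓝[>] (0:ℝ), (w' : E) + t • ((w' : E) - z) ∈ V :=
    hev0.filter_mono nhdsWithin_le_nhds
  obtain ⟨t, htV, ht⟩ := (hev.and eventually_mem_nhdsWithin).exists
  refine ⟨t, ht, ?_⟩
  have hmem : (w' : E) + t • ((w' : E) - z) ∈ affineSpan ℝ s := by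
    have h := AffineSubspace.smul_vsub_vadd_mem (affineSpan ℝ s) t w'.2
      (subset_affineSpan ℝ s hz) w'.2
    simpa [vsub_eq_sub, vadd_eq_add, add_comm] using h
  exact hVs (show (⟨_, hmem⟩ : affineSpan ℝ s) ∈ Subtype.val ⁻¹' V from htV)

theorem stmt9
    {X Y : Type*} [NormedAddCommGroup X] [InnerProductSpace ℝ X] [FiniteDimensional ℝ X]
    [NormedAddCommGroup Y] [InnerProductSpace ℝ Y] [FiniteDimensional ℝ Y]
    (K : Set Y) (hKclosed : IsClosed K) (hKconv : Convex ℝ K)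
    (hKcone : ∀ c : ℝ, 0 ≤ c → ∀ z ∈ K, c • z ∈ K)
    (A : X →ₗ[ℝ] Y) (b : Y)
    (xbar : X) (hxbar : xbar ∈ intrinsicInterior ℝ {x : X | b - A x ∈ K})
    (Fmin : Set Y) (hFminFace : IsFaceOf Fmin K)
    (hFmin : b - A xbar ∈ intrinsicInterior ℝ Fmin)
    (y : ℕ → Y) (hy0 : y 0 = 0)
    (hy : ∀ i : ℕ, 1 ≤ i →
      y i ∈ dualCone (K ∩ {z : Y | ∀ j : ℕ, j < i → (inner ℝ z (y j) : ℝ) = 0}) ∧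
      (∀ x : X, (inner ℝ (A x) (y i) : ℝ) = 0) ∧ (inner ℝ b (y i) : ℝ) = 0) :
    ∀ i : ℕ, Fmin ⊆ K ∩ {z : Y | ∀ j : ℕ, j ≤ i → (inner ℝ z (y j) : ℝ) = 0} := by
  intro i
  induction i with
  | zero =>
    intro z hz
    refine ⟨hFminFace.1 hz, fun j hj => ?_⟩
    interval_cases j
    simp [hy0]
  | succ i IH =>
    have hsub : Fmin ⊆ K ∩ {z : Y | ∀ j : ℕ, j < i + 1 → (inner ℝ z (y j) : ℝ) = 0} := by
      intro z hz
      obtain ⟨hzK, hzP⟩ := IH hz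
      exact ⟨hzK, fun j hj => hzP j (Nat.lt_succ_iff.mp hj)⟩
    obtain ⟨hdual, hA, hb⟩ := hy (i + 1) (by omega)
    have hnonneg : ∀ x ∈ Fmin, 0 ≤ (inner ℝ x (y (i + 1)) : ℝ) := fun x hx => hdual x (hsub hx)
    have hw0 : (inner ℝ (b - A xbar) (y (i + 1)) : ℝ) = 0 := by
      rw [inner_sub_left, hA xbar, hb]; ring
    have hzero : ∀ z ∈ Fmin, (inner ℝ z (y (i + 1)) : ℝ) = 0 := by
      intro z hz
      refine le_antisymm ?_ (hnonneg z hz)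
      obtain ⟨t, ht, hp⟩ := relint_extend hFmin hz
      have h := hnonneg _ hp
      rw [inner_add_left, real_inner_smul_left] at h
      simp only [inner_sub_left, hb, hA] at h
      nlinarith [hnonneg z hz]
    intro z hz
    refine ⟨hFminFace.1 hz, fun j hj => ?_⟩
    rcases eq_or_lt_of_le hj with h | h
    · subst h; exact hzero z hz
    · exact (IH hz).2 j (Nat.lt_succ_iff.mp h)
end

section
/- In the facial reduction algorithm, the number of reducing iterations (iterations i where F_i ⊊ F_{i−1}) is at most min(ℓ_K − 1, dim L), where ℓ_K is the length of the longest chain of faces of K and L = N((A,b)*). In particular, if y_{i_1}, …, y_{i_k} are the certificates from reducing iterations, they are linearly independent, so k ≤ dim L. -/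
theorem stmt10
    {X Y : Type*} [NormedAddCommGroup X] [InnerProductSpace ℝ X] [FiniteDimensional ℝ X]
    [NormedAddCommGroup Y] [InnerProductSpace ℝ Y] [FiniteDimensional ℝ Y]
    (K : Set Y) (hKclosed : IsClosed K) (hKconv : Convex ℝ K)
    (hKcone : ∀ c : ℝ, 0 ≤ c → ∀ z ∈ K, c • z ∈ K)
    (A : X →ₗ[ℝ] Y) (b : Y)
    (xbar : X) (hxbar : xbar ∈ intrinsicInterior ℝ {x : X | b - A x ∈ K})
    (Fmin : Set Y) (hFminFace : IsFaceOf Fmin K)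
    (hFmin : b - A xbar ∈ intrinsicInterior ℝ Fmin)
    (L : Submodule ℝ Y) (hL : L = (LinearMap.range A ⊔ Submodule.span ℝ {b})ᗮ)
    (y : ℕ → Y) (F : ℕ → Set Y) (hy0 : y 0 = 0) (hF0 : F 0 = K)
    (hstep : ∀ i : ℕ, y (i + 1) ∈ dualCone (F i) ∧ y (i + 1) ∈ L ∧
      F (i + 1) = F i ∩ {z : Y | (inner ℝ z (y (i + 1)) : ℝ) = 0})
    (k : ℕ) (idx : Fin k → ℕ) (hmono : StrictMono idx) (hpos : ∀ j : Fin k, 1 ≤ idx j)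
    (hred : ∀ j : Fin k, F (idx j) ⊂ F (idx j - 1))
    (ℓK : ℕ)
    (hchain : ∀ (m : ℕ) (G : Fin m → Set Y),
      (∀ j : Fin m, IsFaceOf (G j) K) → StrictMono G → m ≤ ℓK) :
    LinearIndependent ℝ (fun j : Fin k => y (idx j)) ∧
    k ≤ min (ℓK - 1) (Module.finrank ℝ L) := by
  classical
  -- F is antitone
  have hFsub : ∀ i j : ℕ, i ≤ j → F j ⊆ F i := by
    intro i j hij
    induction j with
    | zero =>
      have : i = 0 := Nat.le_zero.mp hij
      subst this; exact subset_rfl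
    | succ n ih =>
      rcases Nat.lt_or_ge i (n+1) with h | h
      · have h1 : F (n+1) ⊆ F n := by
          rw [(hstep n).2.2]; exact Set.inter_subset_left
        exact h1.trans (ih (Nat.lt_succ_iff.mp h))
      · have : i = n+1 := le_antisymm hij h
        subst this; exact subset_rfl
  -- every F i is a face of K
  have hFace : ∀ i, IsFaceOf (F i) K := by
    intro i
    induction i with
    | zero =>
      rw [hF0]
      exact ⟨subset_rfl, hKconv, fun x hx z hz t _ _ _ => ⟨hx, hz⟩⟩
    | succ n ih =>
      obtain ⟨hdual, -, hEq⟩ := hstep n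
      rw [hEq]
      refine ⟨Set.inter_subset_left.trans ih.1, ?_, ?_⟩
      · intro a ha c hc s t hs ht hst
        refine ⟨ih.2.1 ha.1 hc.1 hs ht hst, ?_⟩
        have ha2 := ha.2
        have hc2 := hc.2
        simp only [Set.mem_setOf_eq] at ha2 hc2 ⊢
        rw [inner_add_left, real_inner_smul_left, real_inner_smul_left, ha2, hc2]
        ring
      · intro x hx z hz t ht0 ht1 hmem
        obtain ⟨hmemF, hmemO⟩ := hmem
        obtain ⟨hxF, hzF⟩ := ih.2.2 x hx z hz t ht0 ht1 hmemF
        have hxn : (0:ℝ) ≤ inner ℝ x (y (n+1)) := hdual x hxF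
        have hzn : (0:ℝ) ≤ inner ℝ z (y (n+1)) := hdual z hzF
        simp only [Set.mem_setOf_eq] at hmemO
        rw [inner_add_left, real_inner_smul_left, real_inner_smul_left] at hmemO
        have hx0 : (inner ℝ x (y (n+1)) : ℝ) = 0 := by nlinarith
        have hz0 : (inner ℝ z (y (n+1)) : ℝ) = 0 := by nlinarith
        exact ⟨⟨hxF, hx0⟩, ⟨hzF, hz0⟩⟩
  -- the certificate vanishes on the next face
  have hvanish : ∀ j : Fin k, ∀ z ∈ F (idx j), (inner ℝ z (y (idx j)) : ℝ) = 0 := by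
    intro j z hz
    have hidx : idx j - 1 + 1 = idx j := by have := hpos j; omega
    rw [← hidx] at hz
    rw [(hstep (idx j - 1)).2.2] at hz
    rw [← hidx]
    exact hz.2
  -- linear independence
  have hli : LinearIndependent ℝ (fun j : Fin k => y (idx j)) := by
    rw [Fintype.linearIndependent_iff]
    intro g hg
    by_contra hne
    push_neg at hne
    obtain ⟨j0, hj0⟩ := hne
    set S : Finset (Fin k) := Finset.univ.filter (fun i => g i ≠ 0) with hS
    have hSne : S.Nonempty := ⟨j0, by simp [hS, hj0]⟩
    set j : Fin k := S.max' hSne with hj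
    have hjS : j ∈ S := S.max'_mem hSne
    have hgj : g j ≠ 0 := by simpa [hS] using hjS
    have key : ∀ z ∈ F (idx j - 1), (inner ℝ z (y (idx j)) : ℝ) = 0 := by
      intro z hz
      have h1 : (inner ℝ z (∑ i, g i • y (idx i)) : ℝ) = 0 := by
        rw [hg, inner_zero_right]
      rw [inner_sum] at h1
      simp only [real_inner_smul_right] at h1
      have h2 : ∀ i ∈ Finset.univ, i ≠ j → g i * (inner ℝ z (y (idx i)) : ℝ) = 0 := by
        intro i _ hij
        by_cases hgi : g i = 0
        · rw [hgi]; ring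
        · have hiS : i ∈ S := by simp [hS, hgi]
          have hle : i ≤ j := Finset.le_max' S i hiS
          have hlt : i < j := lt_of_le_of_ne hle hij
          have hidxlt : idx i ≤ idx j - 1 := by
            have := hmono hlt; omega
          have hzF : z ∈ F (idx i) := hFsub _ _ hidxlt hz
          rw [hvanish i z hzF]; ring
      rw [Finset.sum_eq_single_of_mem j (Finset.mem_univ j) h2] at h1
      exact (mul_eq_zero.mp h1).resolve_left hgj
    have hsub : F (idx j - 1) ⊆ F (idx j) := by
      intro z hz
      have hidx : idx j - 1 + 1 = idx j := by have := hpos j; omega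
      rw [← hidx, (hstep (idx j - 1)).2.2]
      exact ⟨hz, by simp only [Set.mem_setOf_eq, hidx]; exact key z hz⟩
    exact (hred j).2 hsub
  refine ⟨hli, ?_⟩
  -- strict inclusion helper
  have hstrict : ∀ (a : Fin k) (n : ℕ), n < idx a → F (idx a) ⊂ F n := by
    intro a n hn
    exact lt_of_lt_of_le (hred a) (hFsub n (idx a - 1) (by omega))
  -- chain bound : k + 1 ≤ ℓK
  have hcount : k + 1 ≤ ℓK := by
    set e : Fin (k+1) → ℕ := fun j =>
      if h : (j:ℕ) < k then idx ⟨k - 1 - j, by omega⟩ else 0 with he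
    apply hchain (k+1) (fun j => F (e j)) (fun j => hFace (e j))
    intro j1 j2 hlt
    show F (e j1) ⊂ F (e j2)
    have hj1k : (j1:ℕ) < k := by
      have h2 : (j2:ℕ) ≤ k := Nat.lt_succ_iff.mp j2.isLt
      have : (j1:ℕ) < (j2:ℕ) := hlt
      omega
    have he1 : e j1 = idx ⟨k - 1 - j1, by omega⟩ := by simp [he, hj1k]
    by_cases hj2k : (j2:ℕ) < k
    · have he2 : e j2 = idx ⟨k - 1 - j2, by omega⟩ := by simp [he, hj2k]
      have hfin : (⟨k - 1 - j2, by omega⟩ : Fin k) < ⟨k - 1 - j1, by omega⟩ := by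
        simp only [Fin.mk_lt_mk]
        have : (j1:ℕ) < (j2:ℕ) := hlt
        omega
      have := hmono hfin
      rw [he1, he2]
      exact hstrict _ _ this
    · have he2 : e j2 = 0 := by simp [he, hj2k]
      rw [he1, he2, hF0, ← hF0]
      exact hstrict _ 0 (by have := hpos (⟨k - 1 - j1, by omega⟩ : Fin k); omega)
  -- dimension bound
  have hyL : ∀ j : Fin k, y (idx j) ∈ L := by
    intro j
    have hidx : idx j - 1 + 1 = idx j := by have := hpos j; omega
    rw [← hidx]
    exact (hstep (idx j - 1)).2.1
  have hliL : LinearIndependent ℝ (fun j : Fin k => (⟨y (idx j), hyL j⟩ : L)) := by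
    apply LinearIndependent.of_comp L.subtype
    exact hli
  have hcard : k ≤ Module.finrank ℝ L := by
    simpa using hliL.fintype_card_le_finrank
  omega
end

section
/- The set {(u,v) : u ∈ K*, v ∈ tan(u, K*)} is a convex cone (though possibly not closed). -/
section Aux

variable {E : Type*} [NormedAddCommGroup E] [InnerProductSpace ℝ E]

lemma dualCone_convex (K : Set E) : Convex ℝ (dualCone K) := by
  intro y1 h1 y2 h2 a b ha hb hab
  intro x hx
  have := h1 x hx
  have := h2 x hx
  simp only [inner_add_right, real_inner_smul_right]
  positivity

lemma dualCone_smul (K : Set E) {a : ℝ} (ha : 0 ≤ a) {y : E} (hy : y ∈ dualCone K) :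
    a • y ∈ dualCone K := by
  intro x hx
  rw [real_inner_smul_right]
  exact mul_nonneg ha (hy x hx)

/-- If `s ∈ (0, t]` and `u + t • y ∈ C`, `u ∈ C`, then `u + s • y ∈ C`. -/
lemma seg_mem {C : Set E} (hC : Convex ℝ C) {u y : E} {t s : ℝ}
    (ht : 0 < t) (hs : 0 < s) (hst : s ≤ t) (hu : u ∈ C) (hmem : u + t • y ∈ C) :
    u + s • y ∈ C := by
  have hc : (0:ℝ) ≤ s / t := by positivity
  have hc1 : s / t ≤ 1 := by
    rw [div_le_one ht]; exact hst
  have := hC hu hmem (by linarith : (0:ℝ) ≤ 1 - s / t) hc (by ring)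
  have heq : (1 - s / t) • u + (s / t) • (u + t • y) = u + s • y := by
    have : (s / t) * t = s := div_mul_cancel₀ s ht.ne'
    rw [smul_add, smul_smul, this]
    module
  rwa [heq] at this

/-- Combination lemma for direction cones. -/
lemma dirCone_comb {C : Set E} (hC : Convex ℝ C) {u1 u2 y z : E} {a b : ℝ}
    (hu1 : u1 ∈ C) (hu2 : u2 ∈ C) (hy : y ∈ dirCone u1 C) (hz : z ∈ dirCone u2 C)
    (ha : 0 ≤ a) (hb : 0 ≤ b) (hab : a + b = 1) :
    a • y + b • z ∈ dirCone (a • u1 + b • u2) C := by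
  obtain ⟨t1, ht1, hm1⟩ := hy
  obtain ⟨t2, ht2, hm2⟩ := hz
  refine ⟨min t1 t2, lt_min ht1 ht2, ?_⟩
  have h1 : u1 + (min t1 t2) • y ∈ C :=
    seg_mem hC ht1 (lt_min ht1 ht2) (min_le_left _ _) hu1 hm1
  have h2 : u2 + (min t1 t2) • z ∈ C :=
    seg_mem hC ht2 (lt_min ht1 ht2) (min_le_right _ _) hu2 hm2
  have := hC h1 h2 ha hb hab
  have heq : a • (u1 + (min t1 t2) • y) + b • (u2 + (min t1 t2) • z)
      = a • u1 + b • u2 + (min t1 t2) • (a • y + b • z) := by module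
  rwa [heq] at this

lemma closure_dirCone_comb {C : Set E} (hC : Convex ℝ C) {u1 u2 v1 v2 : E} {a b : ℝ}
    (hu1 : u1 ∈ C) (hu2 : u2 ∈ C)
    (hv1 : v1 ∈ closure (dirCone u1 C)) (hv2 : v2 ∈ closure (dirCone u2 C))
    (ha : 0 ≤ a) (hb : 0 ≤ b) (hab : a + b = 1) :
    a • v1 + b • v2 ∈ closure (dirCone (a • u1 + b • u2) C) := by
  have hmaps : Set.MapsTo (fun p : E × E => a • p.1 + b • p.2)
      (dirCone u1 C ×ˢ dirCone u2 C) (dirCone (a • u1 + b • u2) C) := by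
    rintro ⟨y, z⟩ ⟨hy, hz⟩
    exact dirCone_comb hC hu1 hu2 hy hz ha hb hab
  have hcont : Continuous (fun p : E × E => a • p.1 + b • p.2) := by fun_prop
  have := hmaps.closure hcont
  have hmem : (v1, v2) ∈ closure (dirCone u1 C ×ˢ dirCone u2 C) := by
    rw [closure_prod_eq]; exact ⟨hv1, hv2⟩
  exact this hmem

lemma dirCone_smul_map {C : Set E} (hCcone : ∀ c : ℝ, 0 ≤ c → ∀ z ∈ C, c • z ∈ C)
    {u y : E} {a : ℝ} (ha : 0 < a) (hy : y ∈ dirCone u C) :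
    a • y ∈ dirCone (a • u) C := by
  obtain ⟨t, ht, hm⟩ := hy
  refine ⟨t, ht, ?_⟩
  have := hCcone a ha.le _ hm
  have heq : a • (u + t • y) = a • u + t • (a • y) := by module
  rwa [heq] at this

lemma closure_dirCone_smul {C : Set E} (hCcone : ∀ c : ℝ, 0 ≤ c → ∀ z ∈ C, c • z ∈ C)
    {u v : E} {a : ℝ} (ha : 0 < a) (hv : v ∈ closure (dirCone u C)) :
    a • v ∈ closure (dirCone (a • u) C) := by
  have hmaps : Set.MapsTo (fun y : E => a • y) (dirCone u C) (dirCone (a • u) C) :=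
    fun y hy => dirCone_smul_map hCcone ha hy
  exact hmaps.closure (by fun_prop) hv

end Aux

theorem stmt11 {E : Type*} [NormedAddCommGroup E] [InnerProductSpace ℝ E]
    [FiniteDimensional ℝ E]
    (K : Set E) (hKclosed : IsClosed K) (hKconv : Convex ℝ K)
    (hKcone : ∀ c : ℝ, 0 ≤ c → ∀ z ∈ K, c • z ∈ K) :
    Convex ℝ {p : E × E | p.1 ∈ dualCone K ∧ p.2 ∈ tanSpace p.1 (dualCone K)} ∧
    ∀ a : ℝ, 0 < a → ∀ p ∈ {p : E × E | p.1 ∈ dualCone K ∧ p.2 ∈ tanSpace p.1 (dualCone K)},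
      a • p ∈ {p : E × E | p.1 ∈ dualCone K ∧ p.2 ∈ tanSpace p.1 (dualCone K)} := by
  have hDconv : Convex ℝ (dualCone K) := dualCone_convex K
  have hDcone : ∀ c : ℝ, 0 ≤ c → ∀ z ∈ dualCone K, c • z ∈ dualCone K :=
    fun c hc z hz => dualCone_smul K hc hz
  constructor
  · rintro ⟨u1, v1⟩ ⟨hu1, hv1, hv1'⟩ ⟨u2, v2⟩ ⟨hu2, hv2, hv2'⟩ a b ha hb hab
    refine ⟨hDconv hu1 hu2 ha hb hab, ?_, ?_⟩
    · exact closure_dirCone_comb hDconv hu1 hu2 hv1 hv2 ha hb hab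
    · rw [Set.mem_neg] at hv1' hv2' ⊢
      have := closure_dirCone_comb hDconv hu1 hu2 hv1' hv2' ha hb hab
      have heq : a • (-v1) + b • (-v2) = -(a • v1 + b • v2) := by module
      rwa [heq] at this
  · rintro a ha ⟨u, v⟩ ⟨hu, hv, hv'⟩
    refine ⟨hDcone a ha.le u hu, ?_, ?_⟩
    · exact closure_dirCone_smul hDcone ha hv
    · rw [Set.mem_neg] at hv' ⊢
      have := closure_dirCone_smul hDcone ha hv'
      have heq : a • (-v) = -(a • v) := by module
      rwa [heq] at this
end

section
/- Let K be a nice closed convex cone (K* + F^⊥ is closed for every face F of K), let u_0 = 0, and let u_1, …, u_k ∈ K* and v_1, …, v_k with v_i ∈ (K ∩ (u_0 + ⋯ + u_{i−1})^⊥)^⊥ for each i. Then for each i, K ∩ (u_0+⋯+u_{i−1})^⊥ ∩ (u_i+v_i)^⊥ = K ∩ (u_0+⋯+u_i)^⊥. -/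
open Pointwise in
theorem stmt13 {E : Type*} [NormedAddCommGroup E] [InnerProductSpace ℝ E]
    [FiniteDimensional ℝ E]
    (K : Set E) (hKclosed : IsClosed K) (hKconv : Convex ℝ K)
    (hKcone : ∀ c : ℝ, 0 ≤ c → ∀ z ∈ K, c • z ∈ K)
    (hnice : ∀ F : Set E, IsFaceOf F K → IsClosed (dualCone K + perpSpan F))
    (k : ℕ) (u v : ℕ → E) (hu0 : u 0 = 0)
    (hu : ∀ i : ℕ, 1 ≤ i → i ≤ k → u i ∈ dualCone K)
    (hv : ∀ i : ℕ, 1 ≤ i → i ≤ k →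
      v i ∈ perpSpan (K ∩ {z : E | (inner ℝ z (∑ j ∈ Finset.range i, u j) : ℝ) = 0})) :
    ∀ i : ℕ, 1 ≤ i → i ≤ k →
      K ∩ {z : E | (inner ℝ z (∑ j ∈ Finset.range i, u j) : ℝ) = 0}
        ∩ {z : E | (inner ℝ z (u i + v i) : ℝ) = 0}
      = K ∩ {z : E | (inner ℝ z (∑ j ∈ Finset.range (i + 1), u j) : ℝ) = 0} := by
  intro i hi1 hik
  ext z
  simp only [Set.mem_inter_iff, Set.mem_setOf_eq, Finset.sum_range_succ, inner_add_right]
  constructor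
  · rintro ⟨⟨hzK, hS⟩, huv⟩
    have hv' : (inner ℝ z (v i) : ℝ) = 0 := hv i hi1 hik z ⟨hzK, hS⟩
    rw [hv', add_zero] at huv
    exact ⟨hzK, by rw [hS, huv, add_zero]⟩
  · rintro ⟨hzK, hsum⟩
    have hnn : ∀ j ∈ Finset.range i, 0 ≤ (inner ℝ z (u j) : ℝ) := by
      intro j hj
      rcases Nat.eq_zero_or_pos j with h0 | hpos
      · simp [h0, hu0]
      · exact hu j hpos ((Finset.mem_range.mp hj).le.trans hik) z hzK
    have hSnn : 0 ≤ (inner ℝ z (∑ j ∈ Finset.range i, u j) : ℝ) := by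
      rw [inner_sum]; exact Finset.sum_nonneg hnn
    have hunn : 0 ≤ (inner ℝ z (u i) : ℝ) := hu i hi1 hik z hzK
    have hS0 : (inner ℝ z (∑ j ∈ Finset.range i, u j) : ℝ) = 0 := by linarith
    have hu0' : (inner ℝ z (u i) : ℝ) = 0 := by linarith
    have hv' : (inner ℝ z (v i) : ℝ) = 0 := hv i hi1 hik z ⟨hzK, hS0⟩
    exact ⟨⟨hzK, hS0⟩, by rw [hu0', hv', add_zero]⟩
end

section
/- Let K be a closed convex cone and let F be a face of K of the form F = K ∩ u^⊥ for some u ∈ K*. Then F^⊥ (the orthogonal complement of the span of F) equals tan(u, K*), the tangent space of K* at u. -/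
def Set.innerDualCone {E : Type*} [NormedAddCommGroup E] [InnerProductSpace ℝ E] (S : Set E) :
    Set E :=
  {y | ∀ x ∈ S, 0 ≤ (inner ℝ x y : ℝ)}

theorem ConvexCone.innerDualCone_of_innerDualCone_eq_self {E : Type*} [NormedAddCommGroup E]
    [InnerProductSpace ℝ E] [CompleteSpace E] (K : ConvexCone ℝ E) (ne : (K : Set E).Nonempty)
    (hc : IsClosed (K : Set E)) :
    ((K : Set E).innerDualCone).innerDualCone = K := by
  ext x
  constructor
  · intro hx
    by_contra h
    obtain ⟨f, u, hfs, hux⟩ := geometric_hahn_banach_closed_point K.convex hc h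
    have key : ∀ a ∈ (K : Set E), ∀ c : ℝ, 0 < c → c * f a < u := fun a ha c hc => by
      have := hfs _ (K.smul_mem hc ha)
      simpa using this
    obtain ⟨a0, ha0⟩ := ne
    have hu : 0 ≤ u := by
      by_contra hneg
      push_neg at hneg
      have h1 := key a0 ha0 1 one_pos
      have h2 := key a0 ha0 (u / f a0) (div_pos_of_neg_of_neg hneg (by linarith))
      rw [div_mul_cancel₀ _ (by linarith : f a0 ≠ 0)] at h2
      linarith
    have hle : ∀ a ∈ (K : Set E), f a ≤ 0 := by
      intro a ha
      by_contra hpos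
      push_neg at hpos
      have := key a ha ((u + 1) / f a) (by positivity)
      rw [div_mul_cancel₀ _ hpos.ne'] at this
      linarith
    set w := (InnerProductSpace.toDual ℝ E).symm f
    have hw : ∀ z, (inner ℝ w z : ℝ) = f z := fun z => InnerProductSpace.toDual_symm_apply
    have := hx (-w) (fun z hz => by
      rw [inner_neg_right, real_inner_comm, hw]
      linarith [hle z hz])
    rw [inner_neg_left, hw] at this
    linarith
  · intro hx y hy
    rw [real_inner_comm]
    exact hy x hx

theorem stmt14 {E : Type*} [NormedAddCommGroup E] [InnerProductSpace ℝ E]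
    [FiniteDimensional ℝ E]
    (K : Set E) (hKclosed : IsClosed K) (hKconv : Convex ℝ K)
    (hKcone : ∀ c : ℝ, 0 ≤ c → ∀ z ∈ K, c • z ∈ K)
    (u : E) (hu : u ∈ dualCone K) :
    perpSpan (K ∩ {z : E | (inner ℝ z u : ℝ) = 0}) = tanSpace u (dualCone K) := by
  classical
  set C : Set E := dualCone K with hC
  -- trivial case: K empty
  rcases Set.eq_empty_or_nonempty K with hKe | ⟨z₀, hz₀⟩
  · have hCuniv : C = Set.univ := by
      ext y; simp [hC, dualCone, hKe]
    have hdir : dirCone u C = Set.univ := by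
      ext y; simp [dirCone, hCuniv]; exact ⟨1, one_pos⟩
    have : perpSpan (K ∩ {z : E | (inner ℝ z u : ℝ) = 0}) = Set.univ := by
      ext y; simp [perpSpan, hKe]
    rw [this, tanSpace, hdir]
    simp
  have h0K : (0 : E) ∈ K := by simpa using hKcone 0 le_rfl z₀ hz₀
  -- C is the inner dual cone of K
  have hCdef : ∀ y : E, y ∈ C ↔ ∀ x ∈ K, 0 ≤ (inner ℝ x y : ℝ) := fun y => Iff.rfl
  -- K* ⊆ dir
  have hCsubdir : C ⊆ dirCone u C := by
    intro z hz
    refine ⟨1, one_pos, fun x hx => ?_⟩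
    rw [inner_add_right, one_smul]
    exact add_nonneg (hu x hx) (hz x hx)
  -- -u ∈ dir
  have hnegu : -u ∈ dirCone u C := by
    refine ⟨1/2, by norm_num, fun x hx => ?_⟩
    have : u + (1/2 : ℝ) • (-u) = (1/2 : ℝ) • u := by module
    rw [this, real_inner_smul_right]
    have := hu x hx
    linarith
  -- dirCone as a convex cone
  have hdir_smul : ∀ c : ℝ, 0 < c → ∀ y ∈ dirCone u C, c • y ∈ dirCone u C := by
    rintro c hc y ⟨t, ht, hty⟩
    refine ⟨t / c, div_pos ht hc, ?_⟩
    have : (t / c) • (c • y) = t • y := by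
      rw [smul_smul, div_mul_cancel₀ _ (ne_of_gt hc)]
    rwa [this]
  have hdir_add : ∀ y₁ ∈ dirCone u C, ∀ y₂ ∈ dirCone u C, y₁ + y₂ ∈ dirCone u C := by
    rintro y₁ ⟨t₁, ht₁, h₁⟩ y₂ ⟨t₂, ht₂, h₂⟩
    refine ⟨t₁ * t₂ / (t₁ + t₂), by positivity, fun x hx => ?_⟩
    have e₁ := h₁ x hx
    have e₂ := h₂ x hx
    rw [inner_add_right, real_inner_smul_right] at e₁ e₂ ⊢
    rw [inner_add_right] at *
    set α := (inner ℝ x u : ℝ)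
    set β₁ := (inner ℝ x y₁ : ℝ)
    set β₂ := (inner ℝ x y₂ : ℝ)
    have hsum : 0 < t₁ + t₂ := by linarith
    have key : α + t₁ * t₂ / (t₁ + t₂) * (β₁ + β₂)
        = ((t₁ + t₂) * α + t₁ * t₂ * (β₁ + β₂)) / (t₁ + t₂) := by
      field_simp
    rw [key]
    apply div_nonneg _ hsum.le
    nlinarith [mul_nonneg (le_of_lt ht₂) e₁, mul_nonneg (le_of_lt ht₁) e₂]
  -- dirCone as a convex cone, and its closure
  set dirCC : ConvexCone ℝ E :=
    { carrier := dirCone u C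
      smul_mem' := fun c hc y hy => hdir_smul c hc y hy
      add_mem' := fun y₁ h₁ y₂ h₂ => hdir_add y₁ h₁ y₂ h₂ } with hdirCC
  have h0dir : (0 : E) ∈ dirCone u C := ⟨1, one_pos, by simpa using hu⟩
  set D : ConvexCone ℝ E := dirCC.closure with hD
  have hDset : (D : Set E) = closure (dirCone u C) := rfl
  -- K as a convex cone
  set KCone : ConvexCone ℝ E :=
    { carrier := K
      smul_mem' := fun c hc z hz => hKcone c hc.le z hz
      add_mem' := by
        intro z₁ h₁ z₂ h₂
        have hmid : (1/2 : ℝ) • z₁ + (1/2 : ℝ) • z₂ ∈ K := by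
          have := hKconv h₁ h₂ (by norm_num : (0:ℝ) ≤ 1/2) (by norm_num : (0:ℝ) ≤ 1/2)
            (by norm_num)
          simpa using this
        have := hKcone 2 (by norm_num) _ hmid
        have he : (2:ℝ) • ((1/2 : ℝ) • z₁ + (1/2 : ℝ) • z₂) = z₁ + z₂ := by module
        rwa [he] at this } with hKCone
  have hKCset : (KCone : Set E) = K := rfl
  have hKdual : (Set.innerDualCone K : Set E) = C := rfl
  -- bipolar theorems
  have hbipK := KCone.innerDualCone_of_innerDualCone_eq_self ⟨0, h0K⟩ hKclosed
  have hbipD := D.innerDualCone_of_innerDualCone_eq_self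
    ⟨0, subset_closure h0dir⟩ isClosed_closure
  -- key inclusion : perpSpan F ⊆ closure (dirCone u C)
  have hperp_sub : perpSpan (K ∩ {z : E | (inner ℝ z u : ℝ) = 0}) ⊆ closure (dirCone u C) := by
    intro y hy
    have hyD : y ∈ (((D : Set E).innerDualCone : Set E).innerDualCone : Set E) := by
      intro x hx
      -- x belongs to the dual cone of D; show x ∈ K ∩ u^⊥
      have hxC : ∀ z ∈ C, 0 ≤ (inner ℝ z x : ℝ) := fun z hz =>
        hx z (subset_closure (hCsubdir hz))
      have hxK : x ∈ K := by
        have : x ∈ ((((KCone : Set E)).innerDualCone : Set E).innerDualCone : Set E) := by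
          intro z hz
          exact hxC z hz
        rw [hbipK] at this
        exact this
      have hxu1 : 0 ≤ (inner ℝ u x : ℝ) := hx u (subset_closure (hCsubdir hu))
      have hxu2 : 0 ≤ (inner ℝ (-u) x : ℝ) := hx (-u) (subset_closure hnegu)
      rw [inner_neg_left] at hxu2
      have hxu : (inner ℝ x u : ℝ) = 0 := by
        rw [real_inner_comm]; linarith
      have := hy x ⟨hxK, hxu⟩
      rw [this]
    rw [hbipD] at hyD
    exact hyD
  -- conclusion
  ext y
  constructor
  · intro hy
    have hny : -y ∈ perpSpan (K ∩ {z : E | (inner ℝ z u : ℝ) = 0}) := by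
      intro x hx
      rw [inner_neg_right, hy x hx, neg_zero]
    exact ⟨hperp_sub hy, by rw [Set.mem_neg]; exact hperp_sub hny⟩
  · rintro ⟨h₁, h₂⟩ x ⟨hxK, hxu⟩
    rw [Set.mem_neg] at h₂
    have hcl : closure (dirCone u C) ⊆ {z : E | 0 ≤ (inner ℝ x z : ℝ)} := by
      apply closure_minimal
      · rintro z ⟨t, ht, hin⟩
        have := hin x hxK
        rw [inner_add_right, real_inner_smul_right, hxu, zero_add] at this
        have := nonneg_of_mul_nonneg_right this ht
        exact this
      · exact isClosed_le continuous_const (Continuous.inner continuous_const continuous_id)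
    have e₁ : 0 ≤ (inner ℝ x y : ℝ) := hcl h₁
    have e₂ : 0 ≤ (inner ℝ x (-y) : ℝ) := hcl h₂
    rw [inner_neg_right] at e₂
    linarith
end

section
/- If K is a nice closed convex cone and F = K ∩ u^⊥ for some u ∈ K*, then the dual cone of F satisfies F* = K* + tan(u, K*). -/
section Aux

variable {E : Type*} [NormedAddCommGroup E] [InnerProductSpace ℝ E]

lemma aux_mem_dualCone {S : Set E} {y : E} :
    y ∈ dualCone S ↔ ∀ x ∈ S, 0 ≤ (inner ℝ x y : ℝ) := Iff.rfl

lemma aux_dual_anti {S T : Set E} (h : S ⊆ T) : dualCone T ⊆ dualCone S :=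
  fun _ hy x hx => hy x (h hx)

lemma aux_dual_add {S : Set E} {w p : E} (hw : w ∈ dualCone S) (hp : p ∈ dualCone S) :
    w + p ∈ dualCone S := by
  intro x hx
  rw [inner_add_right]
  exact add_nonneg (hw x hx) (hp x hx)

lemma aux_dual_smul {S : Set E} {w : E} (hw : w ∈ dualCone S) {c : ℝ} (hc : 0 ≤ c) :
    c • w ∈ dualCone S := by
  intro x hx
  rw [real_inner_smul_right]
  exact mul_nonneg hc (hw x hx)

lemma aux_dual_zero (S : Set E) : (0 : E) ∈ dualCone S := by
  intro x _; rw [inner_zero_right]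

lemma aux_dualCone_closure (S : Set E) : dualCone (closure S) = dualCone S := by
  apply Set.Subset.antisymm (aux_dual_anti subset_closure)
  intro y hy x hx
  have hcont : Continuous fun x : E => (inner ℝ x y : ℝ) := continuous_id.inner continuous_const
  have hcl : closure S ⊆ {x : E | 0 ≤ (inner ℝ x y : ℝ)} :=
    closure_minimal hy (isClosed_le continuous_const hcont)
  exact hcl hx

lemma aux_dual_eq_coe [CompleteSpace E] (S : Set E) :
    dualCone S = (ProperCone.innerDual S : Set E) := by
  ext y; rfl

lemma aux_bipolar [FiniteDimensional ℝ E] (C : ConvexCone ℝ E)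
    (hne : (C : Set E).Nonempty) (hcl : IsClosed (C : Set E)) :
    dualCone (dualCone (C : Set E)) = (C : Set E) := by
  obtain ⟨x, hx⟩ := hne
  have h0 : (0:E) ∈ (C : Set E) := by
    have ht := (tendsto_one_div_add_atTop_nhds_zero_nat (𝕜 := ℝ)).smul_const x
    rw [zero_smul] at ht
    exact hcl.mem_of_tendsto ht
      (Filter.Eventually.of_forall fun n => C.smul_mem (by positivity) hx)
  let P : ProperCone ℝ E :=
    { carrier := C
      add_mem' := fun ha hb => C.add_mem ha hb
      zero_mem' := h0
      smul_mem' := fun c z hz => by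
        show (c:ℝ) • z ∈ (C : Set E)
        rcases (c.2 : (0:ℝ) ≤ c).eq_or_lt with h | h
        · rw [← h, zero_smul]; exact h0
        · exact C.smul_mem h hz
      isClosed' := hcl }
  rw [aux_dual_eq_coe, aux_dual_eq_coe]
  exact congrArg (fun Q : ProperCone ℝ E => (Q : Set E)) (ProperCone.innerDual_innerDual P)

end Aux

open Pointwise in
theorem stmt15 {E : Type*} [NormedAddCommGroup E] [InnerProductSpace ℝ E]
    [FiniteDimensional ℝ E]
    (K : Set E) (hKclosed : IsClosed K) (hKconv : Convex ℝ K)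
    (hKcone : ∀ c : ℝ, 0 ≤ c → ∀ z ∈ K, c • z ∈ K)
    (hnice : ∀ F : Set E, IsFaceOf F K → IsClosed (dualCone K + perpSpan F))
    (u : E) (hu : u ∈ dualCone K) :
    dualCone (K ∩ {z : E | (inner ℝ z u : ℝ) = 0}) =
      dualCone K + tanSpace u (dualCone K) := by
  rcases K.eq_empty_or_nonempty with hK | ⟨k0, hk0⟩
  · -- trivial case: K = ∅
    subst hK
    have hD : dualCone (∅ : Set E) = Set.univ := by
      ext y; simp [dualCone]
    have hdir : dirCone u (Set.univ : Set E) = Set.univ := by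
      ext y; exact ⟨fun _ => trivial, fun _ => ⟨1, one_pos, trivial⟩⟩
    have htan : tanSpace u (Set.univ : Set E) = Set.univ := by
      simp [tanSpace, hdir]
    rw [Set.empty_inter, hD, htan]
    ext y
    simp only [Set.mem_univ, true_iff]
    exact ⟨y, trivial, 0, trivial, add_zero y⟩
  · have h0K : (0 : E) ∈ K := by
      simpa using hKcone 0 le_rfl k0 hk0
    set D : Set E := dualCone K with hDdef
    set F : Set E := K ∩ {z : E | (inner ℝ z u : ℝ) = 0} with hFdef
    -- K as a convex cone
    have hKadd : ∀ a ∈ K, ∀ b ∈ K, a + b ∈ K := by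
      intro a ha b hb
      have hmid : (1/2 : ℝ) • a + (1/2 : ℝ) • b ∈ K := by
        have := hKconv ha hb (by norm_num : (0:ℝ) ≤ 1/2) (by norm_num : (0:ℝ) ≤ 1/2)
          (by norm_num)
        simpa using this
      have := hKcone 2 (by norm_num) _ hmid
      rwa [smul_add, smul_smul, smul_smul, (by norm_num : (2:ℝ) * (1/2) = 1),
        one_smul, one_smul] at this
    have hDK : dualCone D = K := by
      let KC : ConvexCone ℝ E :=
        { carrier := K
          smul_mem' := fun c hc z hz => hKcone c hc.le z hz
          add_mem' := fun a ha b hb => hKadd a ha b hb }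
      exact aux_bipolar KC ⟨k0, hk0⟩ hKclosed
    -- the line through u
    set lineU : Set E := Set.range (fun c : ℝ => c • u) with hlineU
    set R : Set E := D + lineU with hRdef
    have hDsubR : D ⊆ R := fun d hd => ⟨d, hd, 0, ⟨0, zero_smul ℝ u⟩, add_zero d⟩
    have hlineR : lineU ⊆ R := fun l hl => ⟨0, aux_dual_zero K, l, hl, zero_add l⟩
    have h0R : (0 : E) ∈ R := hDsubR (aux_dual_zero K)
    -- R is a convex cone
    have hRadd : ∀ a ∈ R, ∀ b ∈ R, a + b ∈ R := by
      rintro _ ⟨d1, hd1, _, ⟨c1, rfl⟩, rfl⟩ _ ⟨d2, hd2, _, ⟨c2, rfl⟩, rfl⟩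
      exact ⟨d1 + d2, aux_dual_add hd1 hd2, (c1 + c2) • u, ⟨c1 + c2, rfl⟩, by
        rw [add_smul]; module⟩
    have hRsmul : ∀ c : ℝ, 0 < c → ∀ z ∈ R, c • z ∈ R := by
      rintro c hc _ ⟨d, hd, _, ⟨s, rfl⟩, rfl⟩
      exact ⟨c • d, aux_dual_smul hd hc.le, (c * s) • u, ⟨c * s, rfl⟩, by
        rw [smul_add, smul_smul]⟩
    -- dirCone u D = R
    have hdir : dirCone u D = R := by
      ext y
      constructor
      · rintro ⟨t, ht, hty⟩
        refine ⟨(1/t) • (u + t • y), aux_dual_smul hty (by positivity), (-(1/t)) • u,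
          ⟨-(1/t), rfl⟩, ?_⟩
        rw [smul_add, smul_smul, one_div, inv_mul_cancel₀ ht.ne', one_smul, neg_smul]
        module
      · rintro ⟨d, hd, _, ⟨c, rfl⟩, rfl⟩
        refine ⟨1 / (1 + |c|), by positivity, ?_⟩
        have h1 : u + (1 / (1 + |c|)) • (d + c • u)
            = (1 + (1 / (1 + |c|)) * c) • u + (1 / (1 + |c|)) • d := by
          rw [smul_add, smul_smul, add_smul, one_smul]; module
        rw [h1]
        have hpos : 0 ≤ 1 + (1 / (1 + |c|)) * c := by
          have h2 : |(1 / (1 + |c|)) * c| ≤ 1 := by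
            rw [abs_mul, abs_div, abs_one, abs_of_pos (by positivity : (0:ℝ) < 1 + |c|)]
            rw [div_mul_eq_mul_div, one_mul, div_le_one (by positivity)]
            linarith [abs_nonneg c]
          linarith [neg_abs_le ((1 / (1 + |c|)) * c)]
        exact aux_dual_add (aux_dual_smul hu hpos) (aux_dual_smul hd (by positivity))
    -- dualCone R = F
    have hdualR : dualCone R = F := by
      apply Set.Subset.antisymm
      · intro y hy
        have hyK : y ∈ K := by
          rw [← hDK]; exact aux_dual_anti hDsubR hy
        have huy : (inner ℝ u y : ℝ) = 0 := by
          have h1 : 0 ≤ (inner ℝ ((1:ℝ) • u) y : ℝ) := hy _ (hlineR ⟨1, rfl⟩)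
          have h2 : 0 ≤ (inner ℝ ((-1:ℝ) • u) y : ℝ) := hy _ (hlineR ⟨-1, rfl⟩)
          rw [one_smul] at h1
          rw [neg_one_smul, inner_neg_left] at h2
          linarith
        exact ⟨hyK, by rw [Set.mem_setOf_eq, real_inner_comm]; exact huy⟩
      · rintro z ⟨hzK, hzu⟩
        rintro _ ⟨d, hd, _, ⟨c, rfl⟩, rfl⟩
        rw [inner_add_left, real_inner_smul_left]
        have h1 : 0 ≤ (inner ℝ d z : ℝ) := by
          rw [real_inner_comm]; exact hd z hzK
        have h2 : (inner ℝ u z : ℝ) = 0 := by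
          rw [real_inner_comm]; exact hzu
        rw [h2]; linarith
    -- dualCone F = closure R
    have hFdual : dualCone F = closure R := by
      let RC : ConvexCone ℝ E :=
        { carrier := R
          smul_mem' := fun c hc z hz => hRsmul c hc z hz
          add_mem' := fun a ha b hb => hRadd a ha b hb }
      have hcl : (RC.closure : Set E) = closure R := rfl
      have : dualCone (dualCone (RC.closure : Set E)) = (RC.closure : Set E) :=
        aux_bipolar RC.closure ⟨0, by rw [hcl]; exact subset_closure h0R⟩
          (by rw [hcl]; exact isClosed_closure)
      rw [hcl, aux_dualCone_closure] at this
      rw [← this, hdualR]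
    -- tanSpace u D = perpSpan F
    have htan : tanSpace u D = perpSpan F := by
      ext y
      simp only [tanSpace, hdir, Set.mem_inter_iff, Set.mem_neg, ← hFdual]
      constructor
      · rintro ⟨h1, h2⟩
        intro x hx
        have ha := h1 x hx
        have hb := h2 x hx
        rw [inner_neg_right] at hb
        linarith
      · intro h
        constructor
        · intro x hx; rw [h x hx]
        · intro x hx; rw [inner_neg_right, h x hx, neg_zero]
    -- F is a face of K
    have hface : IsFaceOf F K := by
      refine ⟨Set.inter_subset_left, ?_, ?_⟩
      · intro x hx y hy a b ha hb hab
        refine ⟨hKconv hx.1 hy.1 ha hb hab, ?_⟩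
        rw [Set.mem_setOf_eq, inner_add_left, real_inner_smul_left, real_inner_smul_left,
          hx.2, hy.2]
        ring
      · intro x hx y hy t ht0 ht1 hmem
        have hxu : 0 ≤ (inner ℝ x u : ℝ) := hu x hx
        have hyu : 0 ≤ (inner ℝ y u : ℝ) := hu y hy
        have hsum : t * (inner ℝ x u : ℝ) + (1 - t) * (inner ℝ y u : ℝ) = 0 := by
          have := hmem.2
          rwa [Set.mem_setOf_eq, inner_add_left, real_inner_smul_left,
            real_inner_smul_left] at this
        have hxu0 : (inner ℝ x u : ℝ) = 0 := by nlinarith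
        have hyu0 : (inner ℝ y u : ℝ) = 0 := by nlinarith
        exact ⟨⟨hx, hxu0⟩, ⟨hy, hyu0⟩⟩
    -- finish
    rw [htan]
    apply Set.Subset.antisymm
    · -- dualCone F ⊆ D + perpSpan F
      have hRsub : R ⊆ D + perpSpan F := by
        rintro _ ⟨d, hd, _, ⟨c, rfl⟩, rfl⟩
        refine ⟨d, hd, c • u, ?_, rfl⟩
        intro x hx
        rw [real_inner_smul_right, hx.2, mul_zero]
      have hclosed : IsClosed (D + perpSpan F) := hnice F hface
      calc dualCone F = closure R := hFdual
        _ ⊆ closure (D + perpSpan F) := closure_mono hRsub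
        _ = D + perpSpan F := hclosed.closure_eq
    · rintro _ ⟨w, hw, p, hp, rfl⟩
      have hwF : w ∈ dualCone F := aux_dual_anti Set.inter_subset_left hw
      have hpF : p ∈ dualCone F := fun x hx => (hp x hx).ge
      exact aux_dual_add hwF hpF
end

section
/- The minimal cone admits the extended representation F_min = {s : 0 ≤_K s and s ≤_K αb − Ax for some x ∈ X and α ≥ 0}; that is, s ∈ F_min if and only if s ∈ K and αb − Ax − s ∈ K for some x and α ≥ 0. -/
open Set

/-- Relative interior extension property: one can move past a relative interior point. -/
lemma beyond {E : Type*} [NormedAddCommGroup E] [NormedSpace ℝ E] (C : Set E) {z y : E}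
    (hz : z ∈ intrinsicInterior ℝ C) (hy : y ∈ C) :
    ∃ ε : ℝ, 0 < ε ∧ z + ε • (z - y) ∈ C := by
  rw [mem_intrinsicInterior] at hz
  obtain ⟨z', hz', hzv⟩ := hz
  have hyspan : y ∈ affineSpan ℝ C := subset_affineSpan ℝ C hy
  have hzspan : z ∈ affineSpan ℝ C := by rw [← hzv]; exact z'.2
  have hmem : ∀ t : ℝ, z + t • (z - y) ∈ affineSpan ℝ C := by
    intro t
    have := (affineSpan ℝ C).smul_vsub_vadd_mem t hzspan hyspan hzspan
    simpa [vsub_eq_sub, vadd_eq_add, add_comm] using this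
  set f : ℝ → affineSpan ℝ C := fun t => ⟨z + t • (z - y), hmem t⟩ with hf
  have hcont : Continuous f := by
    apply Continuous.subtype_mk
    fun_prop
  have hf0 : f 0 = z' := by
    apply Subtype.ext
    simp [hf, hzv]
  have hopen : IsOpen (f ⁻¹' interior ((↑) ⁻¹' C : Set <| affineSpan ℝ C)) :=
    isOpen_interior.preimage hcont
  have h0 : (0 : ℝ) ∈ f ⁻¹' interior ((↑) ⁻¹' C : Set <| affineSpan ℝ C) := by
    simp only [mem_preimage, hf0]; exact hz'
  obtain ⟨δ, hδ, hball⟩ := Metric.isOpen_iff.1 hopen 0 h0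
  refine ⟨δ / 2, by linarith, ?_⟩
  have : (δ / 2 : ℝ) ∈ Metric.ball (0 : ℝ) δ := by
    rw [Metric.mem_ball, Real.dist_eq, sub_zero, abs_of_pos (by linarith)]
    linarith
  have := hball this
  simpa using interior_subset this

theorem stmt18
    {X Y : Type*} [NormedAddCommGroup X] [InnerProductSpace ℝ X] [FiniteDimensional ℝ X]
    [NormedAddCommGroup Y] [InnerProductSpace ℝ Y] [FiniteDimensional ℝ Y]
    (K : Set Y) (hKclosed : IsClosed K) (hKconv : Convex ℝ K)
    (hKcone : ∀ c : ℝ, 0 ≤ c → ∀ z ∈ K, c • z ∈ K)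
    (A : X →ₗ[ℝ] Y) (b : Y)
    (xbar : X) (hxbar : xbar ∈ intrinsicInterior ℝ {x : X | b - A x ∈ K})
    (Fmin : Set Y) (hFminFace : IsFaceOf Fmin K)
    (hFmin : b - A xbar ∈ intrinsicInterior ℝ Fmin) :
    Fmin = {s : Y | s ∈ K ∧ ∃ (x : X) (α : ℝ), 0 ≤ α ∧ α • b - A x - s ∈ K} := by
  obtain ⟨hFsub, hFconv, hFface⟩ := hFminFace
  set z := b - A xbar with hz
  have hzF : z ∈ Fmin := intrinsicInterior_subset hFmin
  have hzK : z ∈ K := hFsub hzF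
  have h0K : (0 : Y) ∈ K := by simpa using hKcone 0 le_rfl z hzK
  have hadd : ∀ u ∈ K, ∀ v ∈ K, u + v ∈ K := by
    intro u hu v hv
    have h1 := hKconv hu hv (by norm_num : (0:ℝ) ≤ 1/2) (by norm_num : (0:ℝ) ≤ 1/2)
      (by norm_num)
    have h2 := hKcone 2 (by norm_num) _ h1
    have heq : (2:ℝ) • ((1/2:ℝ) • u + (1/2:ℝ) • v) = u + v := by module
    rwa [heq] at h2
  have h0F : (0 : Y) ∈ Fmin := by
    have h2z : (2:ℝ) • z ∈ K := hKcone 2 (by norm_num) z hzK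
    have key : (1/2 : ℝ) • ((2:ℝ) • z) + (1 - 1/2 : ℝ) • (0:Y) ∈ Fmin := by
      have heq : (1/2 : ℝ) • ((2:ℝ) • z) + (1 - 1/2 : ℝ) • (0:Y) = z := by module
      rwa [heq]
    exact (hFface _ h2z _ h0K (1/2) (by norm_num) (by norm_num) key).2
  have hFscale : ∀ c : ℝ, 0 ≤ c → ∀ f ∈ Fmin, c • f ∈ Fmin := by
    intro c hc f hf
    rcases le_or_gt c 1 with h1 | h1
    · have := hFconv hf h0F hc (by linarith : (0:ℝ) ≤ 1 - c) (by ring)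
      simpa using this
    · have hc0 : (0:ℝ) < c := by linarith
      have hcf : c • f ∈ K := hKcone c hc f (hFsub hf)
      have key : (1/c : ℝ) • (c • f) + (1 - 1/c : ℝ) • (0:Y) ∈ Fmin := by
        have heq : (1/c : ℝ) • (c • f) + (1 - 1/c : ℝ) • (0:Y) = f := by
          rw [smul_zero, add_zero, smul_smul, one_div, inv_mul_cancel₀ (ne_of_gt hc0), one_smul]
        rwa [heq]
      exact (hFface _ hcf _ h0K (1/c) (by positivity)
        (by rw [div_lt_one hc0]; linarith) key).1
  ext s
  simp only [Set.mem_setOf_eq]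
  constructor
  · intro hs
    obtain ⟨ε, hε, hmem⟩ := beyond Fmin hFmin hs
    refine ⟨hFsub hs, ((1+ε)/ε) • xbar, (1+ε)/ε, by positivity, ?_⟩
    have hK1 := hKcone ε⁻¹ (by positivity) _ (hFsub hmem)
    have heq : ε⁻¹ • (z + ε • (z - s)) = ((1+ε)/ε) • b - A (((1+ε)/ε) • xbar) - s := by
      rw [map_smul, hz]
      match_scalars <;> field_simp <;> ring
    rwa [heq] at hK1
  · rintro ⟨hsK, x, α, hα, hu⟩
    set u := α • b - A x - s with hudef
    have hw : s + u + z ∈ K := hadd _ (hadd _ hsK _ hu) _ hzK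
    set β := α + 1 with hβ
    have hβ0 : (0:ℝ) < β := by dsimp [β]; linarith
    set x' := β⁻¹ • (x + xbar) with hx'
    have hx'K : b - A x' ∈ K := by
      have hK2 := hKcone β⁻¹ (by positivity) _ hw
      have heq : β⁻¹ • (s + u + z) = b - A x' := by
        rw [hx', map_smul, map_add, hudef, hz, hβ]
        match_scalars <;> field_simp <;> ring
      rwa [heq] at hK2
    obtain ⟨ε, hε, hmemC⟩ := beyond {x : X | b - A x ∈ K} hxbar hx'K
    have hmemC' : b - A (xbar + ε • (xbar - x')) ∈ K := hmemC
    have h1ε : (0:ℝ) < 1 + ε := by linarith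
    have hcomb : (1/(1+ε)) • (b - A (xbar + ε • (xbar - x')))
        + (1 - 1/(1+ε)) • (b - A x') = z := by
      rw [map_add, map_smul, map_sub, hz]
      match_scalars <;> field_simp <;> ring
    have hx'F : b - A x' ∈ Fmin := by
      refine (hFface _ hmemC' _ hx'K (1/(1+ε)) (by positivity) ?_ ?_).2
      · rw [div_lt_one h1ε]; linarith
      · rw [hcomb]; exact hzF
    have hwF : s + u + z ∈ Fmin := by
      have hβF := hFscale β hβ0.le _ hx'F
      have heq : β • (b - A x') = s + u + z := by
        rw [hx', map_smul, map_add, hudef, hz, hβ]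
        match_scalars <;> field_simp <;> ring
      rwa [heq] at hβF
    have huz : u + z ∈ K := hadd _ hu _ hzK
    have key : (1/2:ℝ) • s + (1 - 1/2:ℝ) • (u + z) ∈ Fmin := by
      have heq : (1/2:ℝ) • s + (1 - 1/2:ℝ) • (u + z) = (1/2:ℝ) • (s + u + z) := by module
      rw [heq]
      exact hFscale _ (by norm_num) _ hwF
    exact (hFface _ hsK _ huz (1/2) (by norm_num) (by norm_num) key).1
end
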